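/- arXiv:0902.0422 — 3 statements merged into one kernel-verified Lean document; each statement's English description precedes it below -/
import Mathlib

section
/- Let Γ be a linearly ordered abelian group, A a subset of Γ, and {γ_ρ} a strictly increasing sequence in A indexed by a nonempty well-ordered set without largest element. Let f₁,…,fₙ : A → Γ be functions such that for all distinct i, j ∈ {1,…,n} the function f_i − f_j is either strictly increasing or strictly decreasing. Then there is a unique enumeration i₁,…,iₙ of {1,…,n} such that f_{i₁}(γ_ρ) < f_{i₂}(γ_ρ) < … < f_{iₙ}(γ_ρ) eventually (i.e. for all sufficiently large ρ). Moreover, for this enumeration and any δ ∈ Γ such that the set {γ ∈ Γ : 0 < γ < δ} is finite, if 1 ≤ μ < ν ≤ n then f_{i_ν}(γ_ρ) − f_{i_μ}(γ_ρ) > δ eventually. -/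
/-- A strictly monotone or strictly antitone sequence over an index type with no maximum
eventually has constant sign (if it is eventually nonzero-signed). -/
lemma aux_sign {Γ : Type*} [AddCommGroup Γ] [LinearOrder Γ] [IsOrderedAddMonoid Γ]
    {I : Type*} [LinearOrder I] [Nonempty I] [NoMaxOrder I]
    (s : I → Γ) (hs : StrictMono s ∨ StrictAnti s) :
    ∃ ρ₀ : I, (∀ ρ, ρ₀ ≤ ρ → 0 < s ρ) ∨ (∀ ρ, ρ₀ ≤ ρ → s ρ < 0) := by
  rcases hs with hs | hs
  · by_cases h : ∃ ρ, 0 ≤ s ρ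
    · obtain ⟨ρ, hρ⟩ := h
      obtain ⟨ρ', hρ'⟩ := exists_gt ρ
      exact ⟨ρ', Or.inl fun ρ'' h'' =>
        lt_of_lt_of_le (lt_of_le_of_lt hρ (hs hρ')) (hs.monotone h'')⟩
    · push_neg at h
      exact ⟨Classical.arbitrary I, Or.inr fun ρ _ => h ρ⟩
  · by_cases h : ∃ ρ, s ρ ≤ 0
    · obtain ⟨ρ, hρ⟩ := h
      obtain ⟨ρ', hρ'⟩ := exists_gt ρ
      exact ⟨ρ', Or.inr fun ρ'' h'' =>
        lt_of_le_of_lt (hs.antitone h'') (lt_of_lt_of_le (hs hρ') hρ)⟩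
    · push_neg at h
      exact ⟨Classical.arbitrary I, Or.inl fun ρ _ => h ρ⟩

/-- If an injective sequence is eventually positive and `(0, δ)` is finite, then
the sequence is eventually `> δ`. -/
lemma aux_gap {Γ : Type*} [AddCommGroup Γ] [LinearOrder Γ] [IsOrderedAddMonoid Γ]
    {I : Type*} [LinearOrder I] [Nonempty I] [NoMaxOrder I]
    (s : I → Γ) (hinj : Function.Injective s)
    (ρ₀ : I) (hpos : ∀ ρ, ρ₀ ≤ ρ → 0 < s ρ)
    (δ : Γ) (hfin : {x : Γ | 0 < x ∧ x < δ}.Finite) :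
    ∃ ρ₁ : I, ∀ ρ, ρ₁ ≤ ρ → δ < s ρ := by
  have hTfin : ({x : Γ | 0 < x ∧ x < δ} ∪ {δ}).Finite :=
    hfin.union (Set.finite_singleton δ)
  set B : Set I := {ρ | ρ₀ ≤ ρ ∧ s ρ ≤ δ} with hB
  have hBsub : B ⊆ s ⁻¹' ({x : Γ | 0 < x ∧ x < δ} ∪ {δ}) := by
    intro ρ hρ
    rcases lt_or_eq_of_le hρ.2 with h | h
    · exact Or.inl ⟨hpos ρ hρ.1, h⟩
    · exact Or.inr h
  have hBfin : B.Finite := (hTfin.preimage hinj.injOn).subset hBsub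
  have hfin2 : (B ∪ {ρ₀}).Finite := hBfin.union (Set.finite_singleton ρ₀)
  obtain ⟨b, hb⟩ := hfin2.bddAbove
  obtain ⟨ρ₁, hρ₁⟩ := exists_gt b
  refine ⟨ρ₁, fun ρ hρ => ?_⟩
  have hρ₀b : ρ₀ ≤ b := hb (Or.inr rfl)
  have hρ₀ρ : ρ₀ ≤ ρ := hρ₀b.trans (hρ₁.le.trans hρ)
  by_contra hle
  push_neg at hle
  have : ρ ∈ B := ⟨hρ₀ρ, hle⟩
  exact absurd (hb (Or.inl this)) (not_le.mpr (hρ₁.trans_le hρ))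

/-- Lemma 2.2 ("kapla"): given a strictly increasing well-indexed sequence
`{γ_ρ}` in `A ⊆ Γ` and functions `f₁,…,fₙ : A → Γ` whose pairwise differences
are strictly monotone, there is a unique enumeration making the values
eventually strictly ordered; moreover for that enumeration, if
`{γ : 0 < γ < δ}` is finite then consecutive gaps eventually exceed `δ`. -/
theorem stmt0 {Γ : Type*} [AddCommGroup Γ] [LinearOrder Γ] [IsOrderedAddMonoid Γ] (A : Set Γ)
    {I : Type*} [LinearOrder I] [Nonempty I] [NoMaxOrder I] [WellFoundedLT I]
    (γseq : I → A) (hγ : StrictMono fun ρ => (γseq ρ : Γ))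
    (n : ℕ) (f : Fin n → A → Γ)
    (hf : ∀ i j : Fin n, i ≠ j →
      StrictMono (fun x : A => f i x - f j x) ∨
      StrictAnti (fun x : A => f i x - f j x)) :
    ∃ e : Equiv.Perm (Fin n),
      (∃ ρ₀ : I, ∀ ρ : I, ρ₀ ≤ ρ → ∀ μ ν : Fin n, μ < ν →
        f (e μ) (γseq ρ) < f (e ν) (γseq ρ)) ∧
      (∀ e' : Equiv.Perm (Fin n),
        (∃ ρ₀ : I, ∀ ρ : I, ρ₀ ≤ ρ → ∀ μ ν : Fin n, μ < ν →
          f (e' μ) (γseq ρ) < f (e' ν) (γseq ρ)) → e' = e) ∧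
      (∀ δ : Γ, {x : Γ | 0 < x ∧ x < δ}.Finite →
        ∀ μ ν : Fin n, μ < ν →
          ∃ ρ₀ : I, ∀ ρ : I, ρ₀ ≤ ρ →
            δ < f (e ν) (γseq ρ) - f (e μ) (γseq ρ)) := by
  classical
  have hγA : StrictMono γseq := fun a b hab => Subtype.coe_lt_coe.mp (hγ hab)
  -- the difference sequences are strictly monotone or antitone in ρ
  have hmono : ∀ i j : Fin n, i ≠ j →
      StrictMono (fun ρ : I => f i (γseq ρ) - f j (γseq ρ)) ∨
      StrictAnti (fun ρ : I => f i (γseq ρ) - f j (γseq ρ)) := by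
    intro i j hij
    rcases hf i j hij with h | h
    · exact Or.inl fun a b hab => h (hγA hab)
    · exact Or.inr fun a b hab => h (hγA hab)
  -- choose, for each pair, an index past which the sign of the difference is constant
  have key : ∀ p : Fin n × Fin n, ∃ ρ₀ : I, p.1 = p.2 ∨
      ((∀ ρ, ρ₀ ≤ ρ → 0 < f p.1 (γseq ρ) - f p.2 (γseq ρ)) ∨
       (∀ ρ, ρ₀ ≤ ρ → f p.1 (γseq ρ) - f p.2 (γseq ρ) < 0)) := by
    intro p
    by_cases hp : p.1 = p.2
    · exact ⟨Classical.arbitrary I, Or.inl hp⟩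
    · obtain ⟨ρ₀, h⟩ := aux_sign _ (hmono p.1 p.2 hp)
      exact ⟨ρ₀, Or.inr h⟩
  choose R hR using key
  obtain ⟨ρ₀, hρ₀⟩ := Finite.exists_le R
  have stab : ∀ i j : Fin n, i ≠ j →
      (∀ ρ, ρ₀ ≤ ρ → 0 < f i (γseq ρ) - f j (γseq ρ)) ∨
      (∀ ρ, ρ₀ ≤ ρ → f i (γseq ρ) - f j (γseq ρ) < 0) := by
    intro i j hij
    rcases hR (i, j) with h | h
    · exact absurd h hij
    · rcases h with h | h
      · exact Or.inl fun ρ hρ => h ρ ((hρ₀ (i, j)).trans hρ)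
      · exact Or.inr fun ρ hρ => h ρ ((hρ₀ (i, j)).trans hρ)
  -- values at any ρ ≥ ρ₀ are pairwise distinct
  have hne : ∀ ρ, ρ₀ ≤ ρ → Function.Injective (fun i => f i (γseq ρ)) := by
    intro ρ hρ i j hij
    by_contra hij'
    have hij2 : f i (γseq ρ) = f j (γseq ρ) := hij
    rcases stab i j hij' with h | h
    · have := h ρ hρ
      rw [hij2, sub_self] at this
      exact lt_irrefl _ this
    · have := h ρ hρ
      rw [hij2, sub_self] at this
      exact lt_irrefl _ this
  set g : Fin n → Γ := fun i => f i (γseq ρ₀) with hg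
  set e : Equiv.Perm (Fin n) := Tuple.sort g with he
  have hsorted : StrictMono (g ∘ e) :=
    (Tuple.monotone_sort g).strictMono_of_injective
      ((hne ρ₀ le_rfl).comp e.injective)
  -- the eventual ordering for e holds from ρ₀ on
  have hmain : ∀ ρ, ρ₀ ≤ ρ → ∀ μ ν : Fin n, μ < ν →
      f (e μ) (γseq ρ) < f (e ν) (γseq ρ) := by
    intro ρ hρ μ ν hμν
    have hijne : e μ ≠ e ν := fun h => absurd (e.injective h) (ne_of_lt hμν)
    rcases stab (e μ) (e ν) hijne with h | h
    · have h0 := h ρ₀ le_rfl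
      have : g (e μ) < g (e ν) := hsorted hμν
      exact absurd h0 (by simp only [sub_pos, not_lt]; exact this.le)
    · exact sub_neg.mp (h ρ hρ)
  refine ⟨e, ⟨ρ₀, hmain⟩, ?_, ?_⟩
  · -- uniqueness
    rintro e' ⟨ρ₀', hmain'⟩
    set ρ₂ := max ρ₀ ρ₀' with hρ₂
    have h1 : ρ₀ ≤ ρ₂ := le_max_left _ _
    have h2 : ρ₀' ≤ ρ₂ := le_max_right _ _
    set g₂ : Fin n → Γ := fun i => f i (γseq ρ₂) with hg₂
    have hs1 : StrictMono (g₂ ∘ e) := fun μ ν hμν => hmain ρ₂ h1 μ ν hμν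
    have hs2 : StrictMono (g₂ ∘ e') := fun μ ν hμν => hmain' ρ₂ h2 μ ν hμν
    have hrange : Set.range (g₂ ∘ e') = Set.range (g₂ ∘ e) := by
      rw [Set.range_comp, Set.range_comp]
      simp [e.surjective.range_eq, e'.surjective.range_eq]
    haveI : WellFoundedLT (Fin n) := inferInstance
    have heq := (hs2.range_inj hs1).mp hrange
    apply Equiv.Perm.ext
    intro μ
    exact (hne ρ₂ h1) (congrFun heq μ)
  · -- the gap statement
    intro δ hfin μ ν hμν
    have hijne : e ν ≠ e μ := fun h => absurd (e.injective h) (ne_of_gt hμν)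
    have hinj : Function.Injective (fun ρ : I => f (e ν) (γseq ρ) - f (e μ) (γseq ρ)) := by
      rcases hmono (e ν) (e μ) hijne with h | h
      · exact h.injective
      · exact h.injective
    exact aux_gap _ hinj ρ₀ (fun ρ hρ => sub_pos.mpr (hmain ρ hρ μ ν hμν)) δ hfin
end

section
/- Let K and K' be valued difference fields with a common valued difference subfield E, with Γ_E := v(E^×) and residue field k_E of E. Let a ∈ O_K be such that α := ā is σ̄-transcendental over k_E. Then: (i) for every σ-polynomial P(x) = Σ_l b_l · x^{l₀}σ(x)^{l₁}⋯σ^n(x)^{lₙ} over E one has v(P(a)) = min_l v(b_l); (ii) v(E⟨a⟩^×) = v(E^×) = Γ_E, and E⟨a⟩ has residue field k_E⟨α⟩; (iii) if b ∈ O_{K'} is such that β := b̄ is σ̄-transcendental over k_E, then there is a valued difference field isomorphism E⟨a⟩ → E⟨b⟩ over E sending a to b. -/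
/-!
Common definitions: three-sorted valued (difference) fields, σ-polynomials,
pc-sequences, axioms from the paper.
-/

namespace VDFPaper

universe u v w

/-- A valued field, presented as a three-sorted structure `(K, Γ, k; v, π)`.
The valuation is extended to `v : K → WithTop Γ` with `v 0 = ⊤`, and the residue
map `π : O → k` is extended to all of `K` by `0` outside the valuation ring. -/
structure ValuedField (K : Type u) (Γ : Type v) (k : Type w)
    [Field K] [AddCommGroup Γ] [LinearOrder Γ] [IsOrderedAddMonoid Γ] [Field k] where
  v : K → WithTop Γ
  π : K → k
  v_top_iff : ∀ a : K, v a = ⊤ ↔ a = 0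
  v_mul : ∀ a b : K, v (a * b) = v a + v b
  v_add : ∀ a b : K, min (v a) (v b) ≤ v (a + b)
  v_surj : ∀ γ : Γ, ∃ a : K, v a = (γ : WithTop Γ)
  π_add : ∀ a b : K, 0 ≤ v a → 0 ≤ v b → π (a + b) = π a + π b
  π_mul : ∀ a b : K, 0 ≤ v a → 0 ≤ v b → π (a * b) = π a * π b
  π_one : π 1 = 1
  π_surj : Function.Surjective π
  π_eq_zero_iff : ∀ a : K, 0 ≤ v a → (π a = 0 ↔ 0 < v a)
  π_junk : ∀ a : K, ¬ 0 ≤ v a → π a = 0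

/-- A valued difference field (satisfying Axiom 1: `v (σ a) = v a`);
`σr` is the induced automorphism of the residue field. -/
structure ValuedDiffField (K : Type u) (Γ : Type v) (k : Type w)
    [Field K] [AddCommGroup Γ] [LinearOrder Γ] [IsOrderedAddMonoid Γ] [Field k]
    extends ValuedField K Γ k where
  σ : K ≃+* K
  σr : k ≃+* k
  v_σ : ∀ a : K, v (σ a) = v a
  π_σ : ∀ a : K, π (σ a) = σr (π a)

/-- `iterEquiv s m` is the `m`-th iterate (`m : ℤ`) of the automorphism `s`. -/
def iterEquiv {R : Type*} [Mul R] [Add R] (s : R ≃+* R) : ℤ → R → R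
  | Int.ofNat m => (⇑s)^[m]
  | Int.negSucc m => (⇑s.symm)^[m + 1]

/-- Evaluation of the σ-polynomial `f(x, σ x, …, σⁿ x)` at `a`. -/
noncomputable def evalDiff {R : Type*} [CommSemiring R] (s : R → R) {n : ℕ}
    (f : MvPolynomial (Fin (n + 1)) R) (a : R) : R :=
  MvPolynomial.eval (fun i : Fin (n + 1) => s^[(i : ℕ)] a) f

/-- The Taylor coefficient `f_(i)` (Hasse derivative), characterized by
`f(x+y) = Σ_i f_(i)(x) · y^i`. -/
noncomputable def taylorCoeff {R : Type*} [CommRing R] {n : ℕ}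
    (i : Fin (n + 1) →₀ ℕ) (f : MvPolynomial (Fin (n + 1)) R) :
    MvPolynomial (Fin (n + 1)) R :=
  ∑ d ∈ f.support,
    MvPolynomial.monomial (d - i)
      ((∏ j ∈ d.support ∪ i.support, ((d j).choose (i j) : R)) * f.coeff d)

/-- Apply a (not necessarily ring-hom) map to all coefficients; used for
reduction of σ-polynomials over the valuation ring to the residue field. -/
noncomputable def mapCoeffs {R S : Type*} [CommSemiring R] [CommSemiring S]
    (π : R → S) {n : ℕ} (f : MvPolynomial (Fin (n + 1)) R) :
    MvPolynomial (Fin (n + 1)) S :=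
  ∑ d ∈ f.support, MvPolynomial.monomial d (π (f.coeff d))

/-- `|j| = j₀ + ⋯ + jₙ` for a multi-index. -/
def degSum {n : ℕ} (j : Fin (n + 1) →₀ ℕ) : ℕ := j.sum fun _ e => e

/-- The order of a σ-polynomial: the largest `i` such that `σ^i x` occurs. -/
def sigmaOrder {R : Type*} [CommSemiring R] {n : ℕ}
    (f : MvPolynomial (Fin (n + 1)) R) : ℕ :=
  f.support.sup fun d => d.support.sup fun j => (j : ℕ)

lemma sigmaOrder_le {R : Type*} [CommSemiring R] {n : ℕ}
    (f : MvPolynomial (Fin (n + 1)) R) : sigmaOrder f ≤ n :=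
  Finset.sup_le fun d _ => Finset.sup_le fun j _ => Nat.lt_succ_iff.mp j.isLt

/-- Complexity of a σ-polynomial: `(order + 1, degree in σ^order x, total degree)`
for nonconstant ones, `(0,0,0)` for constants (so constants are of lower
complexity than all nonconstant σ-polynomials, as in the paper). -/
noncomputable def sigmaComplexity {R : Type*} [CommSemiring R] {n : ℕ}
    (f : MvPolynomial (Fin (n + 1)) R) : ℕ × ℕ × ℕ :=
  if f.totalDegree = 0 then (0, 0, 0)
  else (sigmaOrder f + 1,
    MvPolynomial.degreeOf (⟨sigmaOrder f, Nat.lt_succ_of_le (sigmaOrder_le f)⟩ : Fin (n + 1)) f,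
    f.totalDegree)

/-- Lexicographic order on complexities. -/
def TripleLT (a b : ℕ × ℕ × ℕ) : Prop :=
  a.1 < b.1 ∨ (a.1 = b.1 ∧ (a.2.1 < b.2.1 ∨ (a.2.1 = b.2.1 ∧ a.2.2 < b.2.2)))

/-- `α` is σ-transcendental over the difference subfield given by `φ : E →+* F`,
where `s` is the difference operator of `F`. -/
def SigmaTranscendentalOver {E F : Type*} [Field E] [Field F]
    (φ : E →+* F) (s : F → F) (α : F) : Prop :=
  ∀ (n : ℕ) (f : MvPolynomial (Fin (n + 1)) E), f ≠ 0 →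
    evalDiff s (MvPolynomial.map φ f) α ≠ 0

/-- `g` is a minimal σ-polynomial of `α` over the difference subfield `φ : E →+* F`. -/
def IsMinimalSigmaPolyOver {E F : Type*} [Field E] [Field F]
    (φ : E →+* F) (s : F → F) {n : ℕ} (g : MvPolynomial (Fin (n + 1)) E) (α : F) : Prop :=
  g ≠ 0 ∧ evalDiff s (MvPolynomial.map φ g) α = 0 ∧
    ∀ (m : ℕ) (h : MvPolynomial (Fin (m + 1)) E), h ≠ 0 →
      TripleLT (sigmaComplexity h) (sigmaComplexity g) →
      evalDiff s (MvPolynomial.map φ h) α ≠ 0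

/-- The difference subfield `E⟨a⟩` generated over `S = E` by `a`:
the subfield generated by `S` together with all `σ^m a`, `m : ℤ`. -/
def genDiffSubfield {F : Type*} [Field F] (s : F ≃+* F) (S : Set F) (a : F) : Subfield F :=
  Subfield.closure (S ∪ Set.range fun m : ℤ => iterEquiv s m a)

/-- An embedding of valued fields (three-sorted). -/
structure ValEmbedding {K₁ Γ₁ k₁ K₂ Γ₂ k₂ : Type*}
    [Field K₁] [AddCommGroup Γ₁] [LinearOrder Γ₁] [IsOrderedAddMonoid Γ₁] [Field k₁]
    [Field K₂] [AddCommGroup Γ₂] [LinearOrder Γ₂] [IsOrderedAddMonoid Γ₂] [Field k₂]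
    (M₁ : ValuedField K₁ Γ₁ k₁) (M₂ : ValuedField K₂ Γ₂ k₂) where
  toField : K₁ →+* K₂
  toGroup : Γ₁ → Γ₂
  toGroup_add : ∀ x y : Γ₁, toGroup (x + y) = toGroup x + toGroup y
  toGroup_mono : StrictMono toGroup
  comm_v : ∀ a : K₁, M₂.v (toField a) = WithTop.map toGroup (M₁.v a)
  toRes : k₁ →+* k₂
  comm_π : ∀ a : K₁, 0 ≤ M₁.v a → M₂.π (toField a) = toRes (M₁.π a)

/-- An embedding (extension) of valued difference fields. -/
structure VDFEmbedding {K₁ Γ₁ k₁ K₂ Γ₂ k₂ : Type*}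
    [Field K₁] [AddCommGroup Γ₁] [LinearOrder Γ₁] [IsOrderedAddMonoid Γ₁] [Field k₁]
    [Field K₂] [AddCommGroup Γ₂] [LinearOrder Γ₂] [IsOrderedAddMonoid Γ₂] [Field k₂]
    (M₁ : ValuedDiffField K₁ Γ₁ k₁) (M₂ : ValuedDiffField K₂ Γ₂ k₂)
    extends ValEmbedding M₁.toValuedField M₂.toValuedField where
  comm_σ : ∀ a : K₁, toField (M₁.σ a) = M₂.σ (toField a)

/-- An extension is immediate if it induces bijections on value groups and residue fields. -/
def ValEmbedding.IsImmediate {K₁ Γ₁ k₁ K₂ Γ₂ k₂ : Type*}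
    [Field K₁] [AddCommGroup Γ₁] [LinearOrder Γ₁] [IsOrderedAddMonoid Γ₁] [Field k₁]
    [Field K₂] [AddCommGroup Γ₂] [LinearOrder Γ₂] [IsOrderedAddMonoid Γ₂] [Field k₂]
    {M₁ : ValuedField K₁ Γ₁ k₁} {M₂ : ValuedField K₂ Γ₂ k₂}
    (E : ValEmbedding M₁ M₂) : Prop :=
  Function.Surjective E.toGroup ∧ Function.Surjective E.toRes

def VDFEmbedding.IsImmediate {K₁ Γ₁ k₁ K₂ Γ₂ k₂ : Type*}
    [Field K₁] [AddCommGroup Γ₁] [LinearOrder Γ₁] [IsOrderedAddMonoid Γ₁] [Field k₁]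
    [Field K₂] [AddCommGroup Γ₂] [LinearOrder Γ₂] [IsOrderedAddMonoid Γ₂] [Field k₂]
    {M₁ : ValuedDiffField K₁ Γ₁ k₁} {M₂ : ValuedDiffField K₂ Γ₂ k₂}
    (E : VDFEmbedding M₁ M₂) : Prop :=
  E.toValEmbedding.IsImmediate

section Pc

variable {K : Type u} {Γ : Type v} {k : Type w}
variable [Field K] [AddCommGroup Γ] [LinearOrder Γ] [IsOrderedAddMonoid Γ] [Field k]

/-- A pc-sequence (pseudo-Cauchy sequence). The index type is assumed to be a
nonempty well-ordered set without greatest element where this matters. -/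
def IsPcSeq {I : Type*} [LinearOrder I] (v : K → WithTop Γ) (a : I → K) : Prop :=
  ∃ ρ₀ : I, ∀ ρ ρ' ρ'' : I, ρ₀ ≤ ρ → ρ < ρ' → ρ' < ρ'' →
    v (a ρ' - a ρ) < v (a ρ'' - a ρ')

/-- `a_ρ ⤳ x` : the sequence `a` pseudoconverges to `x`, i.e. `v (x - a_ρ)` is
eventually strictly increasing. -/
def PseudoLim {I : Type*} [LinearOrder I] (v : K → WithTop Γ) (a : I → K) (x : K) : Prop :=
  ∃ ρ₀ : I, ∀ ρ ρ' : I, ρ₀ ≤ ρ → ρ < ρ' → v (x - a ρ) < v (x - a ρ')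

/-- Two pc-sequences are equivalent: they have the same pseudolimits in every
valued field extension. -/
def PcEquiv (M : ValuedField K Γ k) {I : Type*} [LinearOrder I] (a b : I → K) : Prop :=
  ∀ (K' : Type u) (Γ' : Type v) (k' : Type w)
    [Field K'] [AddCommGroup Γ'] [LinearOrder Γ'] [IsOrderedAddMonoid Γ'] [Field k']
    (M' : ValuedField K' Γ' k') (E : ValEmbedding M M') (x : K'),
    PseudoLim M'.v (fun ρ => E.toField (a ρ)) x ↔
    PseudoLim M'.v (fun ρ => E.toField (b ρ)) x

end Pc

section Axioms

variable {K : Type u} {Γ : Type v} {k : Type w}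
variable [Field K] [AddCommGroup Γ] [LinearOrder Γ] [IsOrderedAddMonoid Γ] [Field k]

/-- Axiom 2: every value is the value of an element of the fixed field. -/
def Axiom2 (M : ValuedDiffField K Γ k) : Prop :=
  ∀ γ : Γ, ∃ a : K, M.σ a = a ∧ M.v a = (γ : WithTop Γ)

/-- Axiom 3 (a scheme about the residue difference field). -/
def Axiom3 (M : ValuedDiffField K Γ k) : Prop :=
  (∀ d : ℕ, 0 < d → ∃ y : k, (⇑M.σr)^[d] y ≠ y) ∧
  (∀ p : ℕ, p.Prime → ringChar k = p →
    ∀ d : ℤ, d ≠ 0 → ∀ e : ℕ, 0 < e → ∃ y : k, iterEquiv M.σr d y ≠ y ^ p ^ e)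

/-- Axiom 4ₙ: solvability in the residue field of inhomogeneous linear
σ̄-equations of order ≤ n. -/
def Axiom4n (M : ValuedDiffField K Γ k) (n : ℕ) : Prop :=
  ∀ α : Fin (n + 1) → k, (∃ i, α i ≠ 0) →
    ∃ y : k, 1 + ∑ i : Fin (n + 1), α i * (⇑M.σr)^[(i : ℕ)] y = 0

def Axiom4 (M : ValuedDiffField K Γ k) : Prop := ∀ n : ℕ, Axiom4n M n

/-- The Witt case for the prime `p`. -/
def WittCase (M : ValuedDiffField K Γ k) (p : ℕ) : Prop :=
  p.Prime ∧ ringChar K = 0 ∧ ringChar k = p ∧ PerfectField k ∧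
  (∃ e : Γ, 0 < e ∧ (∀ γ : Γ, 0 < γ → e ≤ γ) ∧ M.v (p : K) = (e : WithTop Γ)) ∧
  ∀ y : k, M.σr y = y ^ p

/-- Finitely ramified valued (difference) field. -/
def FinitelyRamified (M : ValuedDiffField K Γ k) : Prop :=
  ringChar K = 0 ∧ ∀ p : ℕ, p.Prime → ringChar k = p →
    {γ : Γ | 0 < γ ∧ (γ : WithTop Γ) < M.v (p : K)}.Finite

/-- Workable: Axioms 2 and 3, or Axiom 2 and a Witt case with infinite residue field. -/
def Workable (M : ValuedDiffField K Γ k) : Prop :=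
  (Axiom2 M ∧ Axiom3 M) ∨ (Axiom2 M ∧ ∃ p : ℕ, WittCase M p ∧ Infinite k)

/-- All coefficients lie in the valuation ring. -/
def CoeffsInO (M : ValuedField K Γ k) {n : ℕ} (f : MvPolynomial (Fin (n + 1)) K) : Prop :=
  ∀ d : Fin (n + 1) →₀ ℕ, 0 ≤ M.v (f.coeff d)

/-- `min_{|i| = 1} v (G_(i) (a))`. -/
noncomputable def vG1min (M : ValuedDiffField K Γ k) {n : ℕ}
    (f : MvPolynomial (Fin (n + 1)) K) (a : K) : WithTop Γ :=
  Finset.univ.inf fun i : Fin (n + 1) =>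
    M.v (evalDiff (⇑M.σ) (taylorCoeff (Finsupp.single i 1) f) a)

/-- `G` is σ-henselian at `a` (with `G` over `O` and `a ∈ O`). -/
def SigmaHenselAt (M : ValuedDiffField K Γ k) {n : ℕ}
    (f : MvPolynomial (Fin (n + 1)) K) (a : K) : Prop :=
  0 < M.v (evalDiff (⇑M.σ) f a) ∧ vG1min M f a = 0

/-- `K` is σ-henselian. -/
def SigmaHenselian (M : ValuedDiffField K Γ k) : Prop :=
  ∀ (n : ℕ) (f : MvPolynomial (Fin (n + 1)) K), CoeffsInO M.toValuedField f →
    ∀ a : K, 0 ≤ M.v a → SigmaHenselAt M f a →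
      ∃ b : K, evalDiff (⇑M.σ) f b = 0 ∧ M.v (evalDiff (⇑M.σ) f a) ≤ M.v (a - b)

/-- `(G, a)` is in σ-hensel configuration. -/
def HenselConfig (M : ValuedDiffField K Γ k) {n : ℕ}
    (f : MvPolynomial (Fin (n + 1)) K) (a : K) : Prop :=
  (∃ i : Fin (n + 1), evalDiff (⇑M.σ) (taylorCoeff (Finsupp.single i 1) f) a ≠ 0) ∧
  (evalDiff (⇑M.σ) f a = 0 ∨ ∃ γ : Γ,
    M.v (evalDiff (⇑M.σ) f a) = vG1min M f a + (γ : WithTop Γ) ∧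
    ∀ j : Fin (n + 1) →₀ ℕ, 1 < degSum j →
      M.v (evalDiff (⇑M.σ) f a) <
        M.v (evalDiff (⇑M.σ) (taylorCoeff j f) a) + degSum j • (γ : WithTop Γ))

/-- The pc-sequence `a` is of σ-algebraic type over `K`. -/
def OfSigmaAlgebraicType (M : ValuedDiffField K Γ k) {I : Type*} [LinearOrder I]
    (a : I → K) : Prop :=
  ∃ (n : ℕ) (G : MvPolynomial (Fin (n + 1)) K) (b : I → K),
    IsPcSeq M.v b ∧ PcEquiv M.toValuedField a b ∧
    PseudoLim M.v (fun ρ => evalDiff (⇑M.σ) G (b ρ)) 0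

/-- The pc-sequence `a` is of σ-transcendental type over `K`. -/
def OfSigmaTranscendentalType (M : ValuedDiffField K Γ k) {I : Type*} [LinearOrder I]
    (a : I → K) : Prop :=
  ∀ (n : ℕ) (G : MvPolynomial (Fin (n + 1)) K) (b : I → K),
    IsPcSeq M.v b → PcEquiv M.toValuedField a b →
    ¬ PseudoLim M.v (fun ρ => evalDiff (⇑M.σ) G (b ρ)) 0

/-- `G` is a minimal σ-polynomial of the pc-sequence `a` over `K`. -/
def IsMinPolyOfPcSeq (M : ValuedDiffField K Γ k) {I : Type*} [LinearOrder I]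
    (a : I → K) {n : ℕ} (G : MvPolynomial (Fin (n + 1)) K) : Prop :=
  (∃ b : I → K, IsPcSeq M.v b ∧ PcEquiv M.toValuedField a b ∧
    PseudoLim M.v (fun ρ => evalDiff (⇑M.σ) G (b ρ)) 0) ∧
  ∀ (m : ℕ) (H : MvPolynomial (Fin (m + 1)) K),
    TripleLT (sigmaComplexity H) (sigmaComplexity G) →
    ∀ b : I → K, IsPcSeq M.v b → PcEquiv M.toValuedField a b →
      ¬ PseudoLim M.v (fun ρ => evalDiff (⇑M.σ) H (b ρ)) 0

end Axioms

/-- A bundled extension of a valued field (with prescribed value-group and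
residue sorts). -/
structure ValuedFieldExt {K : Type u} {Γ : Type v} {k : Type w}
    [Field K] [AddCommGroup Γ] [LinearOrder Γ] [IsOrderedAddMonoid Γ] [Field k]
    (M : ValuedField K Γ k) (Γ' : Type v) (k' : Type w)
    [AddCommGroup Γ'] [LinearOrder Γ'] [IsOrderedAddMonoid Γ'] [Field k'] where
  carrier : Type u
  [fieldInst : Field carrier]
  str : ValuedField carrier Γ' k'
  emb : ValEmbedding M str

attribute [instance] ValuedFieldExt.fieldInst

/-- A bundled extension of a valued difference field. -/
structure VDFExt {K : Type u} {Γ : Type v} {k : Type w}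
    [Field K] [AddCommGroup Γ] [LinearOrder Γ] [IsOrderedAddMonoid Γ] [Field k]
    (M : ValuedDiffField K Γ k) (Γ' : Type v) (k' : Type w)
    [AddCommGroup Γ'] [LinearOrder Γ'] [IsOrderedAddMonoid Γ'] [Field k'] where
  carrier : Type u
  [fieldInst : Field carrier]
  str : ValuedDiffField carrier Γ' k'
  emb : VDFEmbedding M str

attribute [instance] VDFExt.fieldInst

section Max

variable {K : Type u} {Γ : Type v} {k : Type w}
variable [Field K] [AddCommGroup Γ] [LinearOrder Γ] [IsOrderedAddMonoid Γ] [Field k]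

/-- Maximal valued field: no proper immediate valued field extension. -/
def MaximalValuedField (M : ValuedField K Γ k) : Prop :=
  ¬ ∃ Ext : ValuedFieldExt M Γ k,
      Ext.emb.IsImmediate ∧ ¬ Function.Surjective Ext.emb.toField

/-- Maximal valued difference field: no proper immediate extension. -/
def MaximalVDF (M : ValuedDiffField K Γ k) : Prop :=
  ¬ ∃ Ext : VDFExt M Γ k,
      Ext.emb.IsImmediate ∧ ¬ Function.Surjective Ext.emb.toField

/-- Every element of the extension is σ-algebraic over the ground field. -/
def SigmaAlgebraicExt {Γ' : Type v} {k' : Type w}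
    [AddCommGroup Γ'] [LinearOrder Γ'] [IsOrderedAddMonoid Γ'] [Field k']
    {M : ValuedDiffField K Γ k} (Ext : VDFExt M Γ' k') : Prop :=
  ∀ x : Ext.carrier, ∃ (n : ℕ) (f : MvPolynomial (Fin (n + 1)) K), f ≠ 0 ∧
    evalDiff (⇑Ext.str.σ) (MvPolynomial.map Ext.emb.toField f) x = 0

/-- σ-algebraically maximal: no proper immediate σ-algebraic extension. -/
def SigmaAlgMaximal (M : ValuedDiffField K Γ k) : Prop :=
  ¬ ∃ Ext : VDFExt M Γ k,
      Ext.emb.IsImmediate ∧ SigmaAlgebraicExt Ext ∧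
      ¬ Function.Surjective Ext.emb.toField

/-- Complete with a discrete valuation. -/
def CompleteDiscrete (M : ValuedField K Γ k) : Prop :=
  (∃ e : Γ ≃o ℤ, ∀ x y : Γ, e (x + y) = e x + e y) ∧
  ∀ u : ℕ → K,
    (∀ γ : Γ, ∃ N : ℕ, ∀ m n : ℕ, N ≤ m → N ≤ n → m ≠ n →
      (γ : WithTop Γ) < M.v (u m - u n)) →
    ∃ x : K, ∀ γ : Γ, ∃ N : ℕ, ∀ n : ℕ, N ≤ n → (γ : WithTop Γ) < M.v (x - u n)

end Max

/-- `g` is an isomorphism of difference fields `A → A'` over `E`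
(via `φ : E → F`, `φ' : E → F'`) sending `a` to `b`; `s, s'` are the difference
operators of the ambient fields. -/
def IsDiffIsoOver {E F F' : Type*} [Field E] [Field F] [Field F']
    (φ : E →+* F) (φ' : E →+* F') (s : F → F) (s' : F' → F')
    (A : Subfield F) (A' : Subfield F') (a : F) (b : F') (g : A →+* F') : Prop :=
  (Set.range fun x : A => g x) = (A' : Set F') ∧
  (∀ (e : E) (he : φ e ∈ A), g ⟨φ e, he⟩ = φ' e) ∧
  (∀ ha : a ∈ A, g ⟨a, ha⟩ = b) ∧
  (∀ (x : A) (hx : s (x : F) ∈ A), g ⟨s (x : F), hx⟩ = s' (g x))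

/-- As `IsDiffIsoOver`, and moreover valuation-preserving. -/
def IsValDiffIsoOver {E F F' : Type*} {Γ Γ' : Type*} [Field E] [Field F] [Field F']
    [AddCommGroup Γ] [LinearOrder Γ] [IsOrderedAddMonoid Γ] [AddCommGroup Γ'] [LinearOrder Γ'] [IsOrderedAddMonoid Γ']
    (v : F → WithTop Γ) (v' : F' → WithTop Γ')
    (φ : E →+* F) (φ' : E →+* F') (s : F → F) (s' : F' → F')
    (A : Subfield F) (A' : Subfield F') (a : F) (b : F') (g : A →+* F') : Prop :=
  IsDiffIsoOver φ φ' s s' A A' a b g ∧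
  ∀ x y : A, v (x : F) ≤ v (y : F) ↔ v' (g x) ≤ v' (g y)

/-- The `D`-transform substitution: `F(x₀,…,xₙ) ↦ F(W₀(y), …, Wₙ(y))` where
`W_j(y) = y₀^{p^j} + p y₁^{p^{j-1}} + ⋯ + p^j y_j`. -/
noncomputable def Dtransform (p : ℕ) {R : Type*} [CommSemiring R] {n : ℕ}
    (F : MvPolynomial (Fin (n + 1)) R) : MvPolynomial (Fin (n + 1)) R :=
  MvPolynomial.bind₁ (fun j : Fin (n + 1) =>
    ∑ i : Fin (n + 1), if (i : ℕ) ≤ (j : ℕ) then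
      MvPolynomial.C ((p : R) ^ (i : ℕ)) * MvPolynomial.X i ^ p ^ ((j : ℕ) - (i : ℕ))
    else 0) F

/-- The initial segment of the ordinals below `lam`, used as a well-ordered
index set. -/
abbrev OrdSeg (lam : Ordinal.{0}) : Type 1 := {o : Ordinal.{0} // o < lam}


section HelperBasic

variable {K : Type u} {Γ : Type v} {k : Type w}
variable [Field K] [AddCommGroup Γ] [LinearOrder Γ] [IsOrderedAddMonoid Γ] [Field k]

namespace ValuedField

variable (M : ValuedField K Γ k)

lemma v_zero : M.v 0 = ⊤ := (M.v_top_iff 0).2 rfl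

lemma v_ne_top {x : K} (h : x ≠ 0) : M.v x ≠ ⊤ := fun ht => h ((M.v_top_iff x).1 ht)

lemma v_one : M.v 1 = 0 := by
  have h1 : M.v 1 ≠ ⊤ := M.v_ne_top one_ne_zero
  have := M.v_mul 1 1
  rw [one_mul] at this
  rcases (WithTop.ne_top_iff_exists.1 h1) with ⟨γ, hγ⟩
  rw [← hγ] at this ⊢
  rw [← WithTop.coe_add, WithTop.coe_eq_coe] at this
  have hγ0 : γ = 0 := left_eq_add.mp this
  rw [hγ0]; rfl

lemma v_neg (x : K) : M.v (-x) = M.v x := by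
  have hm1 : M.v (-1 : K) = 0 := by
    have h1 : M.v (-1 : K) ≠ ⊤ := M.v_ne_top (by norm_num)
    have := M.v_mul (-1) (-1)
    rw [neg_one_mul, neg_neg, M.v_one] at this
    rcases (WithTop.ne_top_iff_exists.1 h1) with ⟨γ, hγ⟩
    rw [← hγ] at this ⊢
    rw [← WithTop.coe_add, ← WithTop.coe_zero, WithTop.coe_eq_coe] at this
    have hγ0 : γ = 0 := by
      rcases lt_trichotomy γ 0 with h | h | h
      · exact absurd this (ne_of_lt (by simpa using add_neg h h)).symm
      · exact h
      · exact absurd this (ne_of_gt (by simpa using add_pos h h)).symm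
    rw [hγ0]; rfl
  calc M.v (-x) = M.v ((-1) * x) := by rw [neg_one_mul]
  _ = M.v (-1 : K) + M.v x := M.v_mul _ _
  _ = M.v x := by rw [hm1, zero_add]

lemma v_inv_add {x : K} (h : x ≠ 0) : M.v x⁻¹ + M.v x = 0 := by
  have := M.v_mul x⁻¹ x
  rw [inv_mul_cancel₀ h, M.v_one] at this
  exact this.symm

lemma π_zero : M.π 0 = 0 := by
  have h0 : (0 : WithTop Γ) ≤ M.v 0 := by rw [M.v_zero]; exact le_top
  exact (M.π_eq_zero_iff 0 h0).2 (by rw [M.v_zero]; exact WithTop.coe_lt_top 0)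

lemma π_neg {x : K} (hx : 0 ≤ M.v x) : M.π (-x) = - M.π x := by
  have hvm : M.v (-x) = M.v x := M.v_neg x
  have : M.π (-x) + M.π x = 0 := by
    rw [← M.π_add _ _ (hvm ▸ hx) hx, neg_add_cancel, M.π_zero]
  exact eq_neg_of_add_eq_zero_left this

lemma v_sum {ι : Type*} (s : Finset ι) (g : ι → K) (h : ∀ j ∈ s, 0 ≤ M.v (g j)) :
    0 ≤ M.v (∑ j ∈ s, g j) := by
  classical
  induction s using Finset.induction_on with
  | empty => simp [M.v_zero]
  | @insert c s' hni ih =>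
    rw [Finset.sum_insert hni]
    refine le_trans ?_ (M.v_add _ _)
    exact le_min (h c (Finset.mem_insert_self _ _))
      (ih fun j hj => h j (Finset.mem_insert_of_mem hj))

lemma v_prod {ι : Type*} (s : Finset ι) (g : ι → K) (h : ∀ j ∈ s, 0 ≤ M.v (g j)) :
    0 ≤ M.v (∏ j ∈ s, g j) := by
  classical
  induction s using Finset.induction_on with
  | empty => simp [M.v_one]
  | @insert c s' hni ih =>
    rw [Finset.prod_insert hni, M.v_mul]
    have h1 := h c (Finset.mem_insert_self _ _)
    have h2 := ih fun j hj => h j (Finset.mem_insert_of_mem hj)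
    exact add_nonneg h1 h2

lemma v_pow {x : K} (hx : 0 ≤ M.v x) (m : ℕ) : 0 ≤ M.v (x ^ m) := by
  induction m with
  | zero => simp [M.v_one]
  | succ m ih => rw [pow_succ, M.v_mul]; exact add_nonneg ih hx

lemma π_sum {ι : Type*} (s : Finset ι) (g : ι → K) (h : ∀ j ∈ s, 0 ≤ M.v (g j)) :
    M.π (∑ j ∈ s, g j) = ∑ j ∈ s, M.π (g j) := by
  classical
  induction s using Finset.induction_on with
  | empty => simp [M.π_zero]
  | @insert c s' hni ih =>
    rw [Finset.sum_insert hni, Finset.sum_insert hni,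
      M.π_add _ _ (h c (Finset.mem_insert_self _ _))
        (M.v_sum s' g fun j hj => h j (Finset.mem_insert_of_mem hj)),
      ih fun j hj => h j (Finset.mem_insert_of_mem hj)]

lemma π_prod {ι : Type*} (s : Finset ι) (g : ι → K) (h : ∀ j ∈ s, 0 ≤ M.v (g j)) :
    M.π (∏ j ∈ s, g j) = ∏ j ∈ s, M.π (g j) := by
  classical
  induction s using Finset.induction_on with
  | empty => simp [M.π_one]
  | @insert c s' hni ih =>
    rw [Finset.prod_insert hni, Finset.prod_insert hni,
      M.π_mul _ _ (h c (Finset.mem_insert_self _ _))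
        (M.v_prod s' g fun j hj => h j (Finset.mem_insert_of_mem hj)),
      ih fun j hj => h j (Finset.mem_insert_of_mem hj)]

lemma π_pow {x : K} (hx : 0 ≤ M.v x) (m : ℕ) : M.π (x ^ m) = (M.π x) ^ m := by
  induction m with
  | zero => simp [M.π_one]
  | succ m ih => rw [pow_succ, pow_succ, M.π_mul _ _ (M.v_pow hx m) hx, ih]

lemma π_inv {x : K} (hx : M.v x = 0) : M.π x⁻¹ = (M.π x)⁻¹ := by
  have hx0 : x ≠ 0 := by
    intro h; rw [h, M.v_zero] at hx; exact (WithTop.top_ne_zero hx)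
  have hvinv : M.v x⁻¹ = 0 := by
    have := M.v_inv_add hx0; rw [hx, add_zero] at this; exact this
  have hπx : M.π x ≠ 0 := by
    intro h
    have := (M.π_eq_zero_iff x (le_of_eq hx.symm)).1 h
    rw [hx] at this; exact lt_irrefl _ this
  have : M.π x⁻¹ * M.π x = 1 := by
    rw [← M.π_mul _ _ (le_of_eq hvinv.symm) (le_of_eq hx.symm), inv_mul_cancel₀ hx0, M.π_one]
  field_simp at this ⊢
  try rw [← this]
  try ring

end ValuedField

namespace ValuedDiffField

variable (M : ValuedDiffField K Γ k)

lemma v_iter (x : K) (m : ℕ) : M.v ((⇑M.σ)^[m] x) = M.v x := by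
  induction m with
  | zero => rfl
  | succ m ih => rw [Function.iterate_succ_apply', M.v_σ, ih]

lemma v_symm (x : K) : M.v (M.σ.symm x) = M.v x := by
  conv_rhs => rw [← M.σ.apply_symm_apply x, M.v_σ]

lemma v_symm_iter (x : K) (m : ℕ) : M.v ((⇑M.σ.symm)^[m] x) = M.v x := by
  induction m with
  | zero => rfl
  | succ m ih => rw [Function.iterate_succ_apply', M.v_symm, ih]

lemma v_iterEquiv (x : K) (m : ℤ) : M.v (iterEquiv M.σ m x) = M.v x := by
  cases m with
  | ofNat m => exact M.v_iter x m
  | negSucc m => exact M.v_symm_iter x (m + 1)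

lemma π_iter (x : K) (m : ℕ) : M.π ((⇑M.σ)^[m] x) = (⇑M.σr)^[m] (M.π x) := by
  induction m with
  | zero => rfl
  | succ m ih => rw [Function.iterate_succ_apply', Function.iterate_succ_apply', M.π_σ, ih]

lemma π_symm (x : K) : M.π (M.σ.symm x) = M.σr.symm (M.π x) := by
  have := M.π_σ (M.σ.symm x)
  rw [M.σ.apply_symm_apply] at this
  rw [this, RingEquiv.symm_apply_apply]

lemma π_symm_iter (x : K) (m : ℕ) :
    M.π ((⇑M.σ.symm)^[m] x) = (⇑M.σr.symm)^[m] (M.π x) := by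
  induction m with
  | zero => rfl
  | succ m ih => rw [Function.iterate_succ_apply', Function.iterate_succ_apply', M.π_symm, ih]

lemma π_iterEquiv (x : K) (m : ℤ) : M.π (iterEquiv M.σ m x) = iterEquiv M.σr m (M.π x) := by
  cases m with
  | ofNat m => exact M.π_iter x m
  | negSucc m => exact M.π_symm_iter x (m + 1)

end ValuedDiffField

end HelperBasic

section HelperMain

variable {K : Type u} {Γ : Type v} {k : Type w} {E : Type u} {ΓE : Type v} {kE : Type w}
variable [Field K] [AddCommGroup Γ] [LinearOrder Γ] [IsOrderedAddMonoid Γ] [Field k]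
variable [Field E] [AddCommGroup ΓE] [LinearOrder ΓE] [IsOrderedAddMonoid ΓE] [Field kE]
variable (MK : ValuedDiffField K Γ k) (ME : ValuedDiffField E ΓE kE)
variable (i : VDFEmbedding ME MK) (a : K)

/-- Evaluation of σ-polynomials over `E`, as a ring hom. -/
noncomputable def ψh (n : ℕ) : MvPolynomial (Fin (n + 1)) E →+* K :=
  MvPolynomial.eval₂Hom i.toField (fun j : Fin (n + 1) => (⇑MK.σ)^[(j : ℕ)] a)

lemma ψh_eq {n : ℕ} (f : MvPolynomial (Fin (n + 1)) E) :
    ψh MK ME i a n f = evalDiff (⇑MK.σ) (MvPolynomial.map i.toField f) a := by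
  unfold ψh evalDiff
  rw [MvPolynomial.eval_map, MvPolynomial.coe_eval₂Hom]

lemma toGroup_zero : i.toGroup 0 = 0 := by
  have := i.toGroup_add 0 0
  rw [add_zero] at this
  exact left_eq_add.mp this

lemma map_toGroup_le_iff (x y : WithTop ΓE) :
    WithTop.map i.toGroup x ≤ WithTop.map i.toGroup y ↔ x ≤ y :=
  WithTop.map_le_iff _ (fun {a b} => i.toGroup_mono.le_iff_le)

lemma vE_le_iff (e₁ e₂ : E) :
    MK.v (i.toField e₁) ≤ MK.v (i.toField e₂) ↔ ME.v e₁ ≤ ME.v e₂ := by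
  rw [i.comm_v, i.comm_v, map_toGroup_le_iff]

lemma vE_nonneg_iff (e : E) : 0 ≤ MK.v (i.toField e) ↔ 0 ≤ ME.v e := by
  have h0 : MK.v (i.toField 1) = 0 := by rw [map_one]; exact MK.v_one
  have h0' : ME.v (1 : E) = 0 := ME.v_one
  rw [← h0, ← h0', vE_le_iff]

lemma toField_inj : Function.Injective i.toField := i.toField.injective

/-- `v` of a σ-polynomial value when all coefficients are in `O_E`. -/
lemma eval_nonneg (ha : 0 ≤ MK.v a) {n : ℕ} (f : MvPolynomial (Fin (n + 1)) E)
    (hc : ∀ d ∈ f.support, 0 ≤ ME.v (f.coeff d)) :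
    0 ≤ MK.v (ψh MK ME i a n f) := by
  unfold ψh
  rw [MvPolynomial.coe_eval₂Hom, MvPolynomial.eval₂_eq]
  apply MK.v_sum
  intro d hd
  rw [MK.v_mul]
  refine add_nonneg ((vE_nonneg_iff MK ME i _).2 (hc d hd)) ?_
  apply MK.v_prod
  intro j _
  exact MK.v_pow (by rw [MK.v_iter]; exact ha) _

/-- The residue of a σ-polynomial value when all coefficients are in `O_E`. -/
lemma eval_res (ha : 0 ≤ MK.v a) {n : ℕ} (f : MvPolynomial (Fin (n + 1)) E)
    (hc : ∀ d ∈ f.support, 0 ≤ ME.v (f.coeff d)) :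
    MK.π (ψh MK ME i a n f) = ∑ d ∈ f.support,
      i.toRes (ME.π (f.coeff d)) *
        ∏ j ∈ d.support, ((⇑MK.σr)^[(j : ℕ)] (MK.π a)) ^ d j := by
  unfold ψh
  rw [MvPolynomial.coe_eval₂Hom, MvPolynomial.eval₂_eq]
  have hterm : ∀ d ∈ f.support, 0 ≤ MK.v (i.toField (f.coeff d) *
      ∏ j ∈ d.support, ((⇑MK.σ)^[(j : ℕ)] a) ^ d j) := by
    intro d hd
    rw [MK.v_mul]
    refine add_nonneg ((vE_nonneg_iff MK ME i _).2 (hc d hd)) ?_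
    exact MK.v_prod _ _ fun j _ => MK.v_pow (by rw [MK.v_iter]; exact ha) _
  rw [MK.π_sum _ _ hterm]
  apply Finset.sum_congr rfl
  intro d hd
  have h1 : 0 ≤ MK.v (i.toField (f.coeff d)) := (vE_nonneg_iff MK ME i _).2 (hc d hd)
  have h2 : 0 ≤ MK.v (∏ j ∈ d.support, ((⇑MK.σ)^[(j : ℕ)] a) ^ d j) :=
    MK.v_prod _ _ fun j _ => MK.v_pow (by rw [MK.v_iter]; exact ha) _
  rw [MK.π_mul _ _ h1 h2, i.comm_π _ (hc d hd),
    MK.π_prod _ _ fun j _ => MK.v_pow (by rw [MK.v_iter]; exact ha) _]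
  congr 1
  apply Finset.prod_congr rfl
  intro j _
  rw [MK.π_pow (by rw [MK.v_iter]; exact ha), MK.π_iter]

lemma mapCoeffs_coeff {n : ℕ} (f : MvPolynomial (Fin (n + 1)) E)
    (d : Fin (n + 1) →₀ ℕ) (hd : d ∈ f.support) :
    (mapCoeffs ME.π f).coeff d = ME.π (f.coeff d) := by
  classical
  unfold mapCoeffs
  rw [MvPolynomial.coeff_sum]
  rw [Finset.sum_eq_single d (fun d' _ hne => by
    rw [MvPolynomial.coeff_monomial]; exact if_neg hne) (fun h => absurd hd h)]
  rw [MvPolynomial.coeff_monomial, if_pos rfl]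

/-- Link to the residue σ-polynomial: the residue of the value is the value
of the reduced polynomial. -/
lemma eval_res_poly (ha : 0 ≤ MK.v a) {n : ℕ} (f : MvPolynomial (Fin (n + 1)) E)
    (hc : ∀ d ∈ f.support, 0 ≤ ME.v (f.coeff d)) :
    evalDiff (⇑MK.σr) (MvPolynomial.map i.toRes (mapCoeffs ME.π f)) (MK.π a) =
      MK.π (ψh MK ME i a n f) := by
  classical
  rw [eval_res MK ME i a ha f hc]
  unfold evalDiff mapCoeffs
  rw [map_sum, map_sum]
  apply Finset.sum_congr rfl
  intro d _
  rw [MvPolynomial.map_monomial, MvPolynomial.eval_monomial]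
  unfold Finsupp.prod
  rfl

/-- Part (i): the valuation of a σ-polynomial value at a residue-transcendental
point is the min of the valuations of the coefficients. -/
lemma key_val (ha : 0 ≤ MK.v a) (htr : SigmaTranscendentalOver i.toRes (⇑MK.σr) (MK.π a))
    {n : ℕ} (f : MvPolynomial (Fin (n + 1)) E) :
    MK.v (ψh MK ME i a n f) = f.support.inf fun d => MK.v (i.toField (f.coeff d)) := by
  classical
  by_cases hf : f = 0
  · subst hf
    rw [map_zero, MvPolynomial.support_zero]
    simp [ValuedField.v_zero]
  · have hne : f.support.Nonempty := MvPolynomial.support_nonempty.2 hf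
    obtain ⟨d0, hd0, hinf⟩ := Finset.exists_mem_eq_inf f.support hne
      (fun d => MK.v (i.toField (f.coeff d)))
    set c := f.coeff d0 with hcdef
    have hc0 : c ≠ 0 := MvPolynomial.mem_support_iff.1 hd0
    set f' := MvPolynomial.C c⁻¹ * f with hf'def
    have hcoeff' : ∀ d, f'.coeff d = c⁻¹ * f.coeff d := fun d =>
      MvPolynomial.coeff_C_mul d c⁻¹ f
    have hsupp' : f'.support = f.support := by
      ext d
      simp only [MvPolynomial.mem_support_iff, hcoeff', ne_eq, mul_eq_zero, inv_eq_zero,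
        hc0, false_or]
    have hmin : ∀ d ∈ f.support,
        MK.v (i.toField c) ≤ MK.v (i.toField (f.coeff d)) := fun d hd =>
      hinf ▸ Finset.inf_le hd
    have hvc : ME.v c ≠ ⊤ := ME.toValuedField.v_ne_top hc0
    have hnn : ∀ d ∈ f'.support, 0 ≤ ME.v (f'.coeff d) := by
      rw [hsupp']
      intro d hd
      rw [hcoeff']
      have h1 : ME.v c ≤ ME.v (f.coeff d) := (vE_le_iff MK ME i _ _).1 (hmin d hd)
      have h2 : ME.v (f.coeff d) = ME.v c + ME.v (c⁻¹ * f.coeff d) := by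
        rw [← ME.v_mul, ← mul_assoc, mul_inv_cancel₀ hc0, one_mul]
      rw [h2] at h1
      have h3 : ME.v c + 0 ≤ ME.v c + ME.v (c⁻¹ * f.coeff d) := by
        rw [add_zero]; exact h1
      exact (WithTop.add_le_add_iff_left hvc).1 h3
    -- the reduced σ-polynomial is nonzero
    set g := mapCoeffs ME.π f' with hgdef
    have hd0' : d0 ∈ f'.support := hsupp'.symm ▸ hd0
    have hgc : g.coeff d0 = 1 := by
      rw [hgdef, mapCoeffs_coeff ME f' d0 hd0', hcoeff', inv_mul_cancel₀ hc0, ME.π_one]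
    have hg0 : g ≠ 0 := fun h => by simp [h] at hgc
    have hres := htr n g hg0
    rw [eval_res_poly MK ME i a ha f' hnn] at hres
    have hv' : 0 ≤ MK.v (ψh MK ME i a n f') := eval_nonneg MK ME i a ha f' hnn
    have hv0 : MK.v (ψh MK ME i a n f') = 0 := by
      by_contra hne0
      exact hres ((MK.π_eq_zero_iff _ hv').2 (lt_of_le_of_ne hv' (Ne.symm hne0)))
    have hfactor : f = MvPolynomial.C c * f' := by
      rw [hf'def, ← mul_assoc, ← MvPolynomial.C_mul, mul_inv_cancel₀ hc0,
        MvPolynomial.C_1, one_mul]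
    have hψC : ψh MK ME i a n (MvPolynomial.C c) = i.toField c := by
      unfold ψh
      rw [MvPolynomial.coe_eval₂Hom, MvPolynomial.eval₂_C]
    calc MK.v (ψh MK ME i a n f)
        = MK.v (ψh MK ME i a n (MvPolynomial.C c) * ψh MK ME i a n f') := by
          rw [← map_mul, ← hfactor]
      _ = MK.v (i.toField c) + MK.v (ψh MK ME i a n f') := by rw [hψC, MK.v_mul]
      _ = MK.v (i.toField c) := by rw [hv0, add_zero]
      _ = f.support.inf fun d => MK.v (i.toField (f.coeff d)) := hinf.symm

lemma ψ_ne_zero (ha : 0 ≤ MK.v a) (htr : SigmaTranscendentalOver i.toRes (⇑MK.σr) (MK.π a))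
    {n : ℕ} {f : MvPolynomial (Fin (n + 1)) E} (hf : f ≠ 0) :
    ψh MK ME i a n f ≠ 0 := by
  intro h
  have hv := key_val MK ME i a ha htr f
  rw [h, MK.toValuedField.v_zero] at hv
  have hne : f.support.Nonempty := MvPolynomial.support_nonempty.2 hf
  obtain ⟨d0, hd0, hinf⟩ := Finset.exists_mem_eq_inf f.support hne
    (fun d => MK.v (i.toField (f.coeff d)))
  rw [hinf] at hv
  exact MK.toValuedField.v_ne_top
    (fun h0 => MvPolynomial.mem_support_iff.1 hd0 (toField_inj MK ME i
      (by rw [h0, map_zero]))) hv.symm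

lemma ψ_inj (ha : 0 ≤ MK.v a) (htr : SigmaTranscendentalOver i.toRes (⇑MK.σr) (MK.π a))
    {n : ℕ} {f g : MvPolynomial (Fin (n + 1)) E}
    (h : ψh MK ME i a n f = ψh MK ME i a n g) : f = g := by
  by_contra hne
  exact ψ_ne_zero MK ME i a ha htr (sub_ne_zero.2 hne) (by rw [map_sub, h, sub_self])

/-- Shift of a σ-polynomial: `(Sh P)(x, σ x, …) = σ (P (x, σ x, …))`, with
coefficients twisted by `σ_E`. -/
noncomputable def shP {n : ℕ} (f : MvPolynomial (Fin (n + 1)) E) :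
    MvPolynomial (Fin (n + 2)) E :=
  MvPolynomial.rename Fin.succ (MvPolynomial.map (ME.σ : E →+* E) f)

lemma shP_ne_zero {n : ℕ} {f : MvPolynomial (Fin (n + 1)) E} (hf : f ≠ 0) :
    shP ME f ≠ 0 := by
  unfold shP
  intro h
  apply hf
  have h1 : (MvPolynomial.map (ME.σ : E →+* E) f) = 0 :=
    MvPolynomial.rename_injective (R := E) Fin.succ (Fin.succ_injective (n + 1))
      (h.trans (map_zero _).symm)
  exact MvPolynomial.map_injective _ ME.σ.injective (h1.trans (map_zero _).symm)

lemma ψ_sh {n : ℕ} (f : MvPolynomial (Fin (n + 1)) E) :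
    ψh MK ME i a (n + 1) (shP ME f) = MK.σ (ψh MK ME i a n f) := by
  unfold ψh shP
  rw [MvPolynomial.coe_eval₂Hom, MvPolynomial.coe_eval₂Hom, MvPolynomial.eval₂_rename,
    MvPolynomial.eval₂_map]
  have hcl : MK.σ (MvPolynomial.eval₂ i.toField
        (fun j : Fin (n + 1) => (⇑MK.σ)^[(j : ℕ)] a) f) =
      MvPolynomial.eval₂ ((MK.σ : K →+* K).comp i.toField)
        (⇑MK.σ ∘ fun j : Fin (n + 1) => (⇑MK.σ)^[(j : ℕ)] a) f :=
    MvPolynomial.eval₂_comp_left (MK.σ : K →+* K) i.toField _ f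
  rw [hcl]
  congr 1
  · ext e
    simp only [RingHom.coe_comp, Function.comp_apply, RingEquiv.coe_toRingHom]
    exact i.comm_σ e

  · funext j
    simp only [Function.comp_apply, RingEquiv.coe_toRingHom, Fin.val_succ]
    rw [Function.iterate_succ_apply']

/-- Casting a σ-polynomial into more variables. -/
noncomputable def castP {n m : ℕ} (h : n ≤ m) (f : MvPolynomial (Fin (n + 1)) E) :
    MvPolynomial (Fin (m + 1)) E :=
  MvPolynomial.rename (Fin.castLE (by omega)) f

lemma castP_ne_zero {n m : ℕ} (h : n ≤ m) {f : MvPolynomial (Fin (n + 1)) E}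
    (hf : f ≠ 0) : castP (E := E) h f ≠ 0 := by
  unfold castP
  intro h0
  exact hf (MvPolynomial.rename_injective (R := E) _ (Fin.castLE_injective _)
    (by rw [h0, map_zero]))

lemma ψ_cast {n m : ℕ} (h : n ≤ m) (f : MvPolynomial (Fin (n + 1)) E) :
    ψh MK ME i a m (castP h f) = ψh MK ME i a n f := by
  unfold ψh castP
  rw [MvPolynomial.coe_eval₂Hom, MvPolynomial.coe_eval₂Hom, MvPolynomial.eval₂_rename]
  congr 1

/-- `x` admits a representation `σ^N x = P(a)/Q(a)` with `P, Q` σ-polynomials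
over `E`, `Q(a) ≠ 0`. -/
def RepAt (N n : ℕ) (x : K) : Prop :=
  ∃ P Q : MvPolynomial (Fin (n + 1)) E, Q ≠ 0 ∧
    (⇑MK.σ)^[N] x * ψh MK ME i a n Q = ψh MK ME i a n P

def HasRep (x : K) : Prop := ∃ N n : ℕ, RepAt MK ME i a N n x

lemma repAt_shift {N n : ℕ} {x : K} (h : RepAt MK ME i a N n x) :
    RepAt MK ME i a (N + 1) (n + 1) x := by
  obtain ⟨P, Q, hQ, hrep⟩ := h
  refine ⟨shP ME P, shP ME Q, shP_ne_zero ME hQ, ?_⟩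
  rw [ψ_sh, ψ_sh, Function.iterate_succ_apply', ← map_mul, hrep]

lemma repAt_shift_many {N n : ℕ} {x : K} (h : RepAt MK ME i a N n x) (j : ℕ) :
    RepAt MK ME i a (N + j) (n + j) x := by
  induction j with
  | zero => exact h
  | succ j ih => exact repAt_shift MK ME i a ih

lemma repAt_cast {N n m : ℕ} (hnm : n ≤ m) {x : K} (h : RepAt MK ME i a N n x) :
    RepAt MK ME i a N m x := by
  obtain ⟨P, Q, hQ, hrep⟩ := h
  exact ⟨castP hnm P, castP hnm Q, castP_ne_zero hnm hQ,
    by rw [ψ_cast, ψ_cast]; exact hrep⟩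

lemma repAt_common {x y : K} (hx : HasRep MK ME i a x) (hy : HasRep MK ME i a y) :
    ∃ N n : ℕ, RepAt MK ME i a N n x ∧ RepAt MK ME i a N n y := by
  obtain ⟨N₁, n₁, hx⟩ := hx
  obtain ⟨N₂, n₂, hy⟩ := hy
  refine ⟨max N₁ N₂, max (n₁ + (max N₁ N₂ - N₁)) (n₂ + (max N₁ N₂ - N₂)), ?_, ?_⟩
  · have h1 := repAt_shift_many MK ME i a hx (max N₁ N₂ - N₁)
    rw [Nat.add_sub_cancel' (le_max_left N₁ N₂)] at h1
    exact repAt_cast MK ME i a (le_max_left _ _) h1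
  · have h2 := repAt_shift_many MK ME i a hy (max N₁ N₂ - N₂)
    rw [Nat.add_sub_cancel' (le_max_right N₁ N₂)] at h2
    exact repAt_cast MK ME i a (le_max_right _ _) h2

lemma ψ_C {n : ℕ} (e : E) : ψh MK ME i a n (MvPolynomial.C e) = i.toField e := by
  unfold ψh
  rw [MvPolynomial.coe_eval₂Hom, MvPolynomial.eval₂_C]

lemma ψ_X {n : ℕ} (j : Fin (n + 1)) :
    ψh MK ME i a n (MvPolynomial.X j) = (⇑MK.σ)^[(j : ℕ)] a := by
  unfold ψh
  rw [MvPolynomial.coe_eval₂Hom, MvPolynomial.eval₂_X]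

section Iter

variable {F : Type*} [Field F] (f : F ≃+* F)

lemma iter_map_add (n : ℕ) (x y : F) :
    (⇑f)^[n] (x + y) = (⇑f)^[n] x + (⇑f)^[n] y := by
  induction n generalizing x y with
  | zero => rfl
  | succ n ih => simp only [Function.iterate_succ_apply]; rw [map_add, ih]

lemma iter_map_mul (n : ℕ) (x y : F) :
    (⇑f)^[n] (x * y) = (⇑f)^[n] x * (⇑f)^[n] y := by
  induction n generalizing x y with
  | zero => rfl
  | succ n ih => simp only [Function.iterate_succ_apply]; rw [map_mul, ih]

lemma iter_map_neg (n : ℕ) (x : F) : (⇑f)^[n] (-x) = -(⇑f)^[n] x := by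
  induction n generalizing x with
  | zero => rfl
  | succ n ih => simp only [Function.iterate_succ_apply]; rw [map_neg, ih]

lemma iter_map_inv (n : ℕ) (x : F) : (⇑f)^[n] x⁻¹ = ((⇑f)^[n] x)⁻¹ := by
  induction n generalizing x with
  | zero => rfl
  | succ n ih => simp only [Function.iterate_succ_apply]; rw [map_inv₀, ih]

lemma iter_map_zero (n : ℕ) : (⇑f)^[n] (0 : F) = 0 := by
  induction n with
  | zero => rfl
  | succ n ih => rw [Function.iterate_succ_apply, map_zero, ih]

lemma iter_eq_zero_iff (n : ℕ) (x : F) : (⇑f)^[n] x = 0 ↔ x = 0 := by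
  constructor
  · intro h
    have hinj : Function.Injective (⇑f)^[n] := Function.Injective.iterate f.injective n
    exact hinj (by rw [h, iter_map_zero])
  · intro h; rw [h, iter_map_zero]

lemma iter_symm_cancel (n : ℕ) (x : F) : (⇑f)^[n] ((⇑f.symm)^[n] x) = x :=
  (Function.LeftInverse.iterate f.apply_symm_apply n) x

lemma symm_iter_cancel (n : ℕ) (x : F) : (⇑f.symm)^[n] ((⇑f)^[n] x) = x :=
  (Function.LeftInverse.iterate f.symm_apply_apply n) x

end Iter

section Rep
set_option linter.unusedSectionVars false

variable (ha : 0 ≤ MK.v a) (htr : SigmaTranscendentalOver i.toRes (⇑MK.σr) (MK.π a))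
include ha htr

lemma hasRep_zero : HasRep MK ME i a 0 :=
  ⟨0, 0, 0, 1, one_ne_zero, by rw [iter_map_zero, zero_mul, map_zero]⟩

lemma hasRep_one : HasRep MK ME i a 1 :=
  ⟨0, 0, 1, 1, one_ne_zero, by simp⟩

lemma hasRep_E (e : E) : HasRep MK ME i a (i.toField e) :=
  ⟨0, 0, MvPolynomial.C e, 1, one_ne_zero, by
    rw [map_one, mul_one, ψ_C]; rfl⟩

lemma hasRep_gen (m : ℤ) : HasRep MK ME i a (iterEquiv MK.σ m a) := by
  cases m with
  | ofNat mm =>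
    refine ⟨0, mm, MvPolynomial.X ⟨mm, Nat.lt_succ_self mm⟩, 1, one_ne_zero, ?_⟩
    rw [map_one, mul_one, ψ_X]
    rfl
  | negSucc mm =>
    refine ⟨mm + 1, 0, MvPolynomial.X 0, 1, one_ne_zero, ?_⟩
    rw [map_one, mul_one, ψ_X]
    show (⇑MK.σ)^[mm + 1] ((⇑MK.σ.symm)^[mm + 1] a) = (⇑MK.σ)^[(0 : ℕ)] a
    rw [iter_symm_cancel]
    rfl

lemma hasRep_add {x y : K} (hx : HasRep MK ME i a x) (hy : HasRep MK ME i a y) :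
    HasRep MK ME i a (x + y) := by
  obtain ⟨N, n, ⟨P, Q, hQ, hP⟩, ⟨P', Q', hQ', hP'⟩⟩ := repAt_common MK ME i a hx hy
  refine ⟨N, n, P * Q' + P' * Q, Q * Q', mul_ne_zero hQ hQ', ?_⟩
  rw [iter_map_add, map_mul, map_add, map_mul, map_mul]
  rw [← hP, ← hP']
  ring

lemma hasRep_neg {x : K} (hx : HasRep MK ME i a x) : HasRep MK ME i a (-x) := by
  obtain ⟨N, n, P, Q, hQ, hP⟩ := hx
  exact ⟨N, n, -P, Q, hQ, by rw [iter_map_neg, map_neg, ← hP]; ring⟩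

lemma hasRep_mul {x y : K} (hx : HasRep MK ME i a x) (hy : HasRep MK ME i a y) :
    HasRep MK ME i a (x * y) := by
  obtain ⟨N, n, ⟨P, Q, hQ, hP⟩, ⟨P', Q', hQ', hP'⟩⟩ := repAt_common MK ME i a hx hy
  refine ⟨N, n, P * P', Q * Q', mul_ne_zero hQ hQ', ?_⟩
  rw [iter_map_mul, map_mul, map_mul]
  rw [← hP, ← hP']
  ring

lemma hasRep_inv {x : K} (hx : HasRep MK ME i a x) : HasRep MK ME i a x⁻¹ := by
  by_cases hx0 : x = 0
  · rw [hx0, inv_zero]; exact hasRep_zero MK ME i a ha htr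
  obtain ⟨N, n, P, Q, hQ, hP⟩ := hx
  have hσx : (⇑MK.σ)^[N] x ≠ 0 := fun h => hx0 ((iter_eq_zero_iff MK.σ N x).1 h)
  have hψQ : ψh MK ME i a n Q ≠ 0 := ψ_ne_zero MK ME i a ha htr hQ
  have hψP : ψh MK ME i a n P ≠ 0 := by
    rw [← hP]; exact mul_ne_zero hσx hψQ
  have hP0 : P ≠ 0 := fun h => hψP (by rw [h, map_zero])
  refine ⟨N, n, Q, P, hP0, ?_⟩
  rw [iter_map_inv, ← hP]
  field_simp

/-- The set of elements with a representation is a subfield. -/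
noncomputable def repField : Subfield K where
  carrier := {x | HasRep MK ME i a x}
  zero_mem' := hasRep_zero MK ME i a ha htr
  one_mem' := hasRep_one MK ME i a ha htr
  add_mem' := fun hx hy => hasRep_add MK ME i a ha htr hx hy
  mul_mem' := fun hx hy => hasRep_mul MK ME i a ha htr hx hy
  neg_mem' := fun hx => hasRep_neg MK ME i a ha htr hx
  inv_mem' := fun _ hx => hasRep_inv MK ME i a ha htr hx

/-- The structure lemma: every element of `E⟨a⟩` has a representation
`σ^N x = P(a)/Q(a)`. -/
lemma mem_hasRep {x : K} (hx : x ∈ genDiffSubfield MK.σ (Set.range i.toField) a) :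
    HasRep MK ME i a x := by
  have hle : genDiffSubfield MK.σ (Set.range i.toField) a ≤ repField MK ME i a ha htr := by
    apply Subfield.closure_le.2
    rintro x (⟨e, rfl⟩ | ⟨m, rfl⟩)
    · exact hasRep_E MK ME i a ha htr e
    · exact hasRep_gen MK ME i a ha htr m
  exact hle hx

end Rep

section IterEquivLemmas

variable {F : Type*} [Field F] (s : F ≃+* F)

lemma iterEquiv_succ (m : ℤ) (x : F) :
    s (iterEquiv s m x) = iterEquiv s (m + 1) x := by
  cases m with
  | ofNat mm =>
    have h : (Int.ofNat mm) + 1 = Int.ofNat (mm + 1) := rfl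
    rw [h]
    show s ((⇑s)^[mm] x) = (⇑s)^[mm + 1] x
    rw [Function.iterate_succ_apply']
  | negSucc mm =>
    cases mm with
    | zero =>
      have h : (Int.negSucc 0) + 1 = Int.ofNat 0 := rfl
      rw [h]
      show s ((⇑s.symm)^[1] x) = x
      simp
    | succ mm =>
      have h : (Int.negSucc (mm + 1)) + 1 = Int.negSucc mm := rfl
      rw [h]
      show s ((⇑s.symm)^[mm + 1 + 1] x) = (⇑s.symm)^[mm + 1] x
      rw [Function.iterate_succ_apply]
      rw [show (⇑s.symm)^[mm+1] (s.symm x) = s.symm ((⇑s.symm)^[mm+1] x) by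
        rw [← Function.iterate_succ_apply, Function.iterate_succ_apply']]
      simp

lemma iterEquiv_pred (m : ℤ) (x : F) :
    s.symm (iterEquiv s m x) = iterEquiv s (m - 1) x := by
  have h := iterEquiv_succ s (m - 1) x
  rw [sub_add_cancel] at h
  rw [← h, RingEquiv.symm_apply_apply]

end IterEquivLemmas

section ResCons

variable (ha : 0 ≤ MK.v a) (htr : SigmaTranscendentalOver i.toRes (⇑MK.σr) (MK.π a))

lemma π_surj_nonneg (κ : kE) : ∃ e : E, 0 ≤ ME.v e ∧ ME.π e = κ := by
  obtain ⟨e, he⟩ := ME.π_surj κ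
  by_cases h : 0 ≤ ME.v e
  · exact ⟨e, h, he⟩
  · refine ⟨0, by rw [ME.toValuedField.v_zero]; exact le_top, ?_⟩
    rw [ME.toValuedField.π_zero, ← he, ME.π_junk e h]

lemma σr_toRes (κ : kE) : MK.σr (i.toRes κ) = i.toRes (ME.σr κ) := by
  obtain ⟨e, he, rfl⟩ := π_surj_nonneg ME κ
  rw [← i.comm_π e he, ← MK.π_σ, ← i.comm_σ, i.comm_π _ (by rw [ME.v_σ]; exact he), ME.π_σ]

lemma σr_symm_toRes (κ : kE) : MK.σr.symm (i.toRes κ) = i.toRes (ME.σr.symm κ) := by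
  apply MK.σr.injective
  rw [RingEquiv.apply_symm_apply, σr_toRes MK ME i, RingEquiv.apply_symm_apply]

/-- The residue-side generated subfield. -/
noncomputable abbrev Ak : Subfield k :=
  genDiffSubfield MK.σr (Set.range i.toRes) (MK.π a)

lemma Ak_σr_symm_mem {y : k} (hy : y ∈ Ak MK ME i a) :
    MK.σr.symm y ∈ Ak MK ME i a := by
  have hle : Ak MK ME i a ≤ Subfield.comap (MK.σr.symm : k →+* k) (Ak MK ME i a) := by
    apply Subfield.closure_le.2
    rintro y (⟨κ, rfl⟩ | ⟨m, rfl⟩) <;> rw [SetLike.mem_coe, Subfield.mem_comap]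
    · rw [show ((MK.σr.symm : k →+* k) (i.toRes κ)) = MK.σr.symm (i.toRes κ) from rfl,
        σr_symm_toRes MK ME i]
      exact Subfield.subset_closure (Or.inl ⟨_, rfl⟩)
    · rw [show ((MK.σr.symm : k →+* k) (iterEquiv MK.σr m (MK.π a))) =
        MK.σr.symm (iterEquiv MK.σr m (MK.π a)) from rfl, iterEquiv_pred]
      exact Subfield.subset_closure (Or.inr ⟨m - 1, rfl⟩)
  exact Subfield.mem_comap.1 (hle hy)

lemma Ak_σr_symm_iter_mem {y : k} (hy : y ∈ Ak MK ME i a) (N : ℕ) :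
    (⇑MK.σr.symm)^[N] y ∈ Ak MK ME i a := by
  induction N with
  | zero => exact hy
  | succ N ih => rw [Function.iterate_succ_apply']; exact Ak_σr_symm_mem MK ME i a ih

/-- The residue of a σ-polynomial value with coefficients in `O_E` lies
in `k_E⟨α⟩`. -/
lemma res_eval_mem (hha : 0 ≤ MK.v a) {n : ℕ} (f : MvPolynomial (Fin (n + 1)) E)
    (hc : ∀ d ∈ f.support, 0 ≤ ME.v (f.coeff d)) :
    MK.π (ψh MK ME i a n f) ∈ Ak MK ME i a := by
  rw [eval_res MK ME i a hha f hc]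
  apply Subfield.sum_mem
  intro d _
  apply Subfield.mul_mem
  · exact Subfield.subset_closure (Or.inl ⟨_, rfl⟩)
  · apply Subfield.prod_mem
    intro j _
    apply Subfield.pow_mem
    exact Subfield.subset_closure (Or.inr ⟨((j : ℕ) : ℤ), rfl⟩)

include ha htr in
/-- Value-group part of (ii). -/
lemma val_of_mem {x : K} (hx : x ∈ genDiffSubfield MK.σ (Set.range i.toField) a)
    (hx0 : x ≠ 0) : ∃ e : E, e ≠ 0 ∧ MK.v x = MK.v (i.toField e) := by
  obtain ⟨N, n, P, Q, hQ, hrep⟩ := mem_hasRep MK ME i a ha htr hx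
  have hσx : (⇑MK.σ)^[N] x ≠ 0 := fun h => hx0 ((iter_eq_zero_iff MK.σ N x).1 h)
  have hψQ : ψh MK ME i a n Q ≠ 0 := ψ_ne_zero MK ME i a ha htr hQ
  have hψP : ψh MK ME i a n P ≠ 0 := by rw [← hrep]; exact mul_ne_zero hσx hψQ
  have hP : P ≠ 0 := fun h => hψP (by rw [h, map_zero])
  -- minimal coefficients
  obtain ⟨dP, hdP, hinfP⟩ := Finset.exists_mem_eq_inf P.support
    (MvPolynomial.support_nonempty.2 hP) (fun d => MK.v (i.toField (P.coeff d)))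
  obtain ⟨dQ, hdQ, hinfQ⟩ := Finset.exists_mem_eq_inf Q.support
    (MvPolynomial.support_nonempty.2 hQ) (fun d => MK.v (i.toField (Q.coeff d)))
  set p := P.coeff dP with hp
  set q := Q.coeff dQ with hq
  have hp0 : p ≠ 0 := MvPolynomial.mem_support_iff.1 hdP
  have hq0 : q ≠ 0 := MvPolynomial.mem_support_iff.1 hdQ
  have hvP : MK.v (ψh MK ME i a n P) = MK.v (i.toField p) := by
    rw [key_val MK ME i a ha htr P, hinfP]
  have hvQ : MK.v (ψh MK ME i a n Q) = MK.v (i.toField q) := by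
    rw [key_val MK ME i a ha htr Q, hinfQ]
  refine ⟨p * q⁻¹, mul_ne_zero hp0 (inv_ne_zero hq0), ?_⟩
  have hvq_ne : MK.v (i.toField q) ≠ ⊤ :=
    MK.toValuedField.v_ne_top (fun h => hq0 (toField_inj MK ME i (by rw [h, map_zero])))
  have h1 : MK.v x + MK.v (i.toField q) = MK.v (i.toField p) := by
    rw [← MK.v_iter x N, ← hvQ, ← MK.v_mul, hrep, hvP]
  have h2 : MK.v (i.toField (p * q⁻¹)) + MK.v (i.toField q) = MK.v (i.toField p) := by
    rw [← MK.v_mul, ← map_mul, mul_assoc, inv_mul_cancel₀ hq0, mul_one]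
  exact WithTop.add_right_cancel hvq_ne (h1.trans h2.symm)

include ha htr in
/-- Residue part of (ii), first inclusion. -/
lemma res_of_mem {x : K} (hx : x ∈ genDiffSubfield MK.σ (Set.range i.toField) a)
    (hnn : 0 ≤ MK.v x) : MK.π x ∈ Ak MK ME i a := by
  obtain ⟨N, n, P, Q, hQ, hrep⟩ := mem_hasRep MK ME i a ha htr hx
  obtain ⟨dQ, hdQ, hinfQ⟩ := Finset.exists_mem_eq_inf Q.support
    (MvPolynomial.support_nonempty.2 hQ) (fun d => MK.v (i.toField (Q.coeff d)))
  set q := Q.coeff dQ with hq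
  have hq0 : q ≠ 0 := MvPolynomial.mem_support_iff.1 hdQ
  have hvQ : MK.v (ψh MK ME i a n Q) = MK.v (i.toField q) := by
    rw [key_val MK ME i a ha htr Q, hinfQ]
  set Q₁ := MvPolynomial.C q⁻¹ * Q with hQ₁def
  set P₁ := MvPolynomial.C q⁻¹ * P with hP₁def
  have hψQ₁ : ψh MK ME i a n Q₁ = i.toField q⁻¹ * ψh MK ME i a n Q := by
    rw [hQ₁def, map_mul, ψ_C]
  have hψP₁ : ψh MK ME i a n P₁ = i.toField q⁻¹ * ψh MK ME i a n P := by
    rw [hP₁def, map_mul, ψ_C]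
  have hvq_ne : MK.v (i.toField q) ≠ ⊤ :=
    MK.toValuedField.v_ne_top (fun h => hq0 (toField_inj MK ME i (by rw [h, map_zero])))
  have hvqinv : MK.v (i.toField q⁻¹) + MK.v (i.toField q) = 0 := by
    rw [← MK.v_mul, ← map_mul, inv_mul_cancel₀ hq0, map_one, MK.v_one]
  -- v (ψ Q₁) = 0
  have hvQ₁ : MK.v (ψh MK ME i a n Q₁) = 0 := by
    rw [hψQ₁, MK.v_mul, hvQ, hvqinv]
  -- coefficient bound lemma
  have coeff_nonneg : ∀ (F : MvPolynomial (Fin (n + 1)) E),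
      (∀ d ∈ F.support, MK.v (i.toField q) ≤ MK.v (i.toField (F.coeff d))) →
      ∀ d ∈ (MvPolynomial.C q⁻¹ * F).support,
        0 ≤ ME.v ((MvPolynomial.C q⁻¹ * F).coeff d) := by
    intro F hF d hd
    rw [MvPolynomial.coeff_C_mul]
    have hd' : d ∈ F.support := by
      rcases MvPolynomial.mem_support_iff.1 hd with h
      rw [MvPolynomial.coeff_C_mul] at h
      exact MvPolynomial.mem_support_iff.2 fun h0 => h (by rw [h0, mul_zero])
    have h1 : MK.v (i.toField q) ≤ MK.v (i.toField (F.coeff d)) := hF d hd'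
    have h2 : ME.v q ≤ ME.v (F.coeff d) := (vE_le_iff MK ME i _ _).1 h1
    have hvq : ME.v q ≠ ⊤ := ME.toValuedField.v_ne_top hq0
    have h3 : ME.v (F.coeff d) = ME.v q + ME.v (q⁻¹ * F.coeff d) := by
      rw [← ME.v_mul, ← mul_assoc, mul_inv_cancel₀ hq0, one_mul]
    rw [h3] at h2
    have h4 : ME.v q + 0 ≤ ME.v q + ME.v (q⁻¹ * F.coeff d) := by
      rw [add_zero]; exact h2
    exact (WithTop.add_le_add_iff_left hvq).1 h4
  have hQ₁c : ∀ d ∈ Q₁.support, 0 ≤ ME.v (Q₁.coeff d) := by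
    apply coeff_nonneg
    intro d hd
    rw [← hinfQ] at *
    exact Finset.inf_le hd
  have hP₁c : ∀ d ∈ P₁.support, 0 ≤ ME.v (P₁.coeff d) := by
    apply coeff_nonneg
    intro d hd
    have h1 : MK.v (ψh MK ME i a n P) ≤ MK.v (i.toField (P.coeff d)) := by
      rw [key_val MK ME i a ha htr P]
      exact Finset.inf_le hd
    refine le_trans ?_ h1
    rw [← hrep, MK.v_mul, MK.v_iter, hvQ]
    nth_rewrite 1 [← zero_add (MK.v (i.toField q))]
    exact add_le_add_left hnn _
  -- relation between residues
  have hrel : (⇑MK.σr)^[N] (MK.π x) * MK.π (ψh MK ME i a n Q₁) =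
      MK.π (ψh MK ME i a n P₁) := by
    rw [← MK.π_iter, ← MK.π_mul _ _ (by rw [MK.v_iter]; exact hnn) (le_of_eq hvQ₁.symm)]
    congr 1
    rw [hψQ₁, hψP₁, ← mul_assoc, mul_comm ((⇑MK.σ)^[N] x) (i.toField q⁻¹), mul_assoc, hrep]
  have hπQ₁ : MK.π (ψh MK ME i a n Q₁) ≠ 0 := by
    intro h
    have := (MK.π_eq_zero_iff _ (le_of_eq hvQ₁.symm)).1 h
    rw [hvQ₁] at this
    exact lt_irrefl _ this
  have hmemQ : MK.π (ψh MK ME i a n Q₁) ∈ Ak MK ME i a :=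
    res_eval_mem MK ME i a ha Q₁ hQ₁c
  have hmemP : MK.π (ψh MK ME i a n P₁) ∈ Ak MK ME i a :=
    res_eval_mem MK ME i a ha P₁ hP₁c
  have hσrx : (⇑MK.σr)^[N] (MK.π x) ∈ Ak MK ME i a := by
    have : (⇑MK.σr)^[N] (MK.π x) =
        MK.π (ψh MK ME i a n P₁) * (MK.π (ψh MK ME i a n Q₁))⁻¹ := by
      field_simp [hπQ₁] at hrel ⊢
      exact hrel
    rw [this]
    exact Subfield.mul_mem _ hmemP (Subfield.inv_mem _ hmemQ)
  have := Ak_σr_symm_iter_mem MK ME i a hσrx N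
  rwa [symm_iter_cancel] at this

include ha in
/-- Residue part of (ii), second inclusion. -/
lemma mem_res_of_Ak {y : k} (hy : y ∈ Ak MK ME i a) :
    ∃ x ∈ genDiffSubfield MK.σ (Set.range i.toField) a, 0 ≤ MK.v x ∧ MK.π x = y := by
  set A := genDiffSubfield MK.σ (Set.range i.toField) a with hA
  set T : Subfield k :=
    { carrier := {y : k | ∃ x ∈ A, 0 ≤ MK.v x ∧ MK.π x = y}
      zero_mem' := ⟨0, Subfield.zero_mem A,
        by rw [MK.toValuedField.v_zero]; exact le_top, MK.toValuedField.π_zero⟩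
      one_mem' := ⟨1, Subfield.one_mem A, le_of_eq MK.v_one.symm, MK.π_one⟩
      add_mem' := by
        rintro y₁ y₂ ⟨x₁, hx₁, hv₁, rfl⟩ ⟨x₂, hx₂, hv₂, rfl⟩
        exact ⟨x₁ + x₂, Subfield.add_mem A hx₁ hx₂,
          le_trans (le_min hv₁ hv₂) (MK.v_add x₁ x₂), MK.π_add x₁ x₂ hv₁ hv₂⟩
      mul_mem' := by
        rintro y₁ y₂ ⟨x₁, hx₁, hv₁, rfl⟩ ⟨x₂, hx₂, hv₂, rfl⟩
        exact ⟨x₁ * x₂, Subfield.mul_mem A hx₁ hx₂,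
          by rw [MK.v_mul]; exact add_nonneg hv₁ hv₂, MK.π_mul x₁ x₂ hv₁ hv₂⟩
      neg_mem' := by
        rintro y ⟨x, hx, hv, rfl⟩
        exact ⟨-x, Subfield.neg_mem A hx, by rw [MK.toValuedField.v_neg]; exact hv,
          MK.toValuedField.π_neg hv⟩
      inv_mem' := by
        rintro y ⟨x, hx, hv, rfl⟩
        by_cases h0 : MK.π x = 0
        · exact ⟨0, Subfield.zero_mem A,
            by rw [MK.toValuedField.v_zero]; exact le_top,
            by rw [MK.toValuedField.π_zero, h0, inv_zero]⟩
        · have hv0 : MK.v x = 0 := by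
            by_contra hne
            exact h0 ((MK.π_eq_zero_iff x hv).2 (lt_of_le_of_ne hv (Ne.symm hne)))
          exact ⟨x⁻¹, Subfield.inv_mem A hx,
            by
              have hx0 : x ≠ 0 := fun h => by
                rw [h, MK.toValuedField.v_zero] at hv0; exact WithTop.top_ne_zero hv0
              have := MK.toValuedField.v_inv_add hx0
              rw [hv0, add_zero] at this
              exact le_of_eq this.symm,
            MK.toValuedField.π_inv hv0⟩ } with hT
  have hle : Ak MK ME i a ≤ T := by
    apply Subfield.closure_le.2
    rintro y (⟨κ, rfl⟩ | ⟨m, rfl⟩)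
    · obtain ⟨e, he, rfl⟩ := π_surj_nonneg ME κ
      exact ⟨i.toField e, Subfield.subset_closure (Or.inl ⟨e, rfl⟩),
        (vE_nonneg_iff MK ME i e).2 he, i.comm_π e he⟩
    · exact ⟨iterEquiv MK.σ m a, Subfield.subset_closure (Or.inr ⟨m, rfl⟩),
        by rw [MK.v_iterEquiv]; exact ha, MK.π_iterEquiv a m⟩
  exact hle hy

end ResCons

end HelperMain

section MoreIter

variable {F : Type*} [Field F] (f : F ≃+* F)

lemma symm_iter_comm (N : ℕ) (z : F) :
    (⇑f.symm)^[N] (f z) = f ((⇑f.symm)^[N] z) := by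
  induction N with
  | zero => rfl
  | succ N ih =>
    rw [Function.iterate_succ_apply', ih, Function.iterate_succ_apply',
      RingEquiv.apply_symm_apply, RingEquiv.symm_apply_apply]

lemma symm_iter_add_cancel (N j : ℕ) (z : F) :
    (⇑f.symm)^[N + j] ((⇑f)^[j] z) = (⇑f.symm)^[N] z := by
  rw [Function.iterate_add_apply, symm_iter_cancel]

lemma iter_map_div (n : ℕ) (x y : F) :
    (⇑f)^[n] (x / y) = (⇑f)^[n] x / (⇑f)^[n] y := by
  rw [div_eq_mul_inv, div_eq_mul_inv, iter_map_mul, iter_map_inv]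

lemma symm_iter_map_div (n : ℕ) (x y : F) :
    (⇑f.symm)^[n] (x / y) = (⇑f.symm)^[n] x / (⇑f.symm)^[n] y :=
  iter_map_div f.symm n x y

lemma symm_iter_map_mul (n : ℕ) (x y : F) :
    (⇑f.symm)^[n] (x * y) = (⇑f.symm)^[n] x * (⇑f.symm)^[n] y :=
  iter_map_mul f.symm n x y

lemma symm_iter_map_add (n : ℕ) (x y : F) :
    (⇑f.symm)^[n] (x + y) = (⇑f.symm)^[n] x + (⇑f.symm)^[n] y :=
  iter_map_add f.symm n x y

end MoreIter

lemma withTop_map_inf {Γ₁ Γ₂ : Type*} [LinearOrder Γ₁] [LinearOrder Γ₂]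
    {ι : Type*} (t : Γ₁ → Γ₂) (ht : Monotone t) (s : Finset ι) (f : ι → WithTop Γ₁) :
    WithTop.map t (s.inf f) = s.inf fun d => WithTop.map t (f d) := by
  classical
  induction s using Finset.induction_on with
  | empty => simp [WithTop.map_top]
  | @insert c s' hni ih =>
    rw [Finset.inf_insert, Finset.inf_insert]
    show WithTop.map t (min (f c) (s'.inf f)) = min (WithTop.map t (f c)) (s'.inf fun d => WithTop.map t (f d))
    rw [Monotone.map_min ht.withTop_map, ih]

section HelperMain2

variable {K : Type u} {Γ : Type v} {k : Type w} {E : Type u} {ΓE : Type v} {kE : Type w}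
variable [Field K] [AddCommGroup Γ] [LinearOrder Γ] [IsOrderedAddMonoid Γ] [Field k]
variable [Field E] [AddCommGroup ΓE] [LinearOrder ΓE] [IsOrderedAddMonoid ΓE] [Field kE]
variable (MK : ValuedDiffField K Γ k) (ME : ValuedDiffField E ΓE kE)
variable (i : VDFEmbedding ME MK) (a : K)

lemma v_div_add {F : Type u} {Γ₀ : Type v} {k₀ : Type w}
    [Field F] [AddCommGroup Γ₀] [LinearOrder Γ₀] [IsOrderedAddMonoid Γ₀] [Field k₀]
    (M : ValuedField F Γ₀ k₀) (u w : F) (hw : w ≠ 0) :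
    M.v (u / w) + M.v w = M.v u := by
  rw [div_eq_mul_inv, M.v_mul, add_assoc, M.v_inv_add hw, add_zero]

/-- Membership of σ-polynomial values in the generated subfield. -/
lemma ψ_mem {n : ℕ} (f : MvPolynomial (Fin (n + 1)) E) :
    ψh MK ME i a n f ∈ genDiffSubfield MK.σ (Set.range i.toField) a := by
  unfold ψh
  rw [MvPolynomial.coe_eval₂Hom]
  apply MvPolynomial.eval₂_mem
  · intro d _
    exact Subfield.subset_closure (Or.inl ⟨_, rfl⟩)
  · intro j
    exact Subfield.subset_closure (Or.inr ⟨((j : ℕ) : ℤ), rfl⟩)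

/-- `E⟨a⟩` is stable under `σ⁻¹`. -/
lemma A_σ_symm_mem {x : K} (hx : x ∈ genDiffSubfield MK.σ (Set.range i.toField) a) :
    MK.σ.symm x ∈ genDiffSubfield MK.σ (Set.range i.toField) a := by
  set A := genDiffSubfield MK.σ (Set.range i.toField) a
  have hle : A ≤ Subfield.comap (MK.σ.symm : K →+* K) A := by
    apply Subfield.closure_le.2
    rintro x (⟨e, rfl⟩ | ⟨m, rfl⟩) <;> rw [SetLike.mem_coe, Subfield.mem_comap]
    · rw [show ((MK.σ.symm : K →+* K) (i.toField e)) = MK.σ.symm (i.toField e) from rfl]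
      have h1 : i.toField e = MK.σ (i.toField (ME.σ.symm e)) := by
        rw [← i.comm_σ, RingEquiv.apply_symm_apply]
      rw [h1, RingEquiv.symm_apply_apply]
      exact Subfield.subset_closure (Or.inl ⟨_, rfl⟩)
    · rw [show ((MK.σ.symm : K →+* K) (iterEquiv MK.σ m a)) =
        MK.σ.symm (iterEquiv MK.σ m a) from rfl, iterEquiv_pred]
      exact Subfield.subset_closure (Or.inr ⟨m - 1, rfl⟩)
  exact Subfield.mem_comap.1 (hle hx)

lemma A_σ_symm_iter_mem {x : K}
    (hx : x ∈ genDiffSubfield MK.σ (Set.range i.toField) a) (N : ℕ) :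
    (⇑MK.σ.symm)^[N] x ∈ genDiffSubfield MK.σ (Set.range i.toField) a := by
  induction N with
  | zero => exact hx
  | succ N ih => rw [Function.iterate_succ_apply']; exact A_σ_symm_mem MK ME i a ih

/-- Iterated shift of σ-polynomials. -/
noncomputable def shIter {n : ℕ} : (j : ℕ) → MvPolynomial (Fin (n + 1)) E →
    MvPolynomial (Fin (n + j + 1)) E
  | 0, P => P
  | j + 1, P => shP ME (shIter j P)

lemma shIter_ne_zero {n : ℕ} (j : ℕ) {f : MvPolynomial (Fin (n + 1)) E} (hf : f ≠ 0) :
    shIter ME j f ≠ 0 := by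
  induction j with
  | zero => exact hf
  | succ j ih => exact shP_ne_zero ME ih

lemma ψ_shIter {n : ℕ} (j : ℕ) (f : MvPolynomial (Fin (n + 1)) E) :
    ψh MK ME i a (n + j) (shIter ME j f) = (⇑MK.σ)^[j] (ψh MK ME i a n f) := by
  induction j with
  | zero => rfl
  | succ j ih =>
    show ψh MK ME i a (n + j + 1) (shP ME (shIter ME j f)) = _
    rw [ψ_sh, ih, Function.iterate_succ_apply']

lemma rep_shIter_eq {N n : ℕ} {x : K} {P Q : MvPolynomial (Fin (n + 1)) E}
    (he : (⇑MK.σ)^[N] x * ψh MK ME i a n Q = ψh MK ME i a n P) (j : ℕ) :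
    (⇑MK.σ)^[j + N] x * ψh MK ME i a (n + j) (shIter ME j Q) =
      ψh MK ME i a (n + j) (shIter ME j P) := by
  rw [ψ_shIter, ψ_shIter, Function.iterate_add_apply, ← iter_map_mul, he]

end HelperMain2

section Iso

variable {K : Type u} {Γ : Type v} {k : Type w} {E : Type u} {ΓE : Type v} {kE : Type w}
variable {K' : Type u} {Γ' : Type v} {k' : Type w}
variable [Field K] [AddCommGroup Γ] [LinearOrder Γ] [IsOrderedAddMonoid Γ] [Field k]
variable [Field E] [AddCommGroup ΓE] [LinearOrder ΓE] [IsOrderedAddMonoid ΓE] [Field kE]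
variable [Field K'] [AddCommGroup Γ'] [LinearOrder Γ'] [IsOrderedAddMonoid Γ'] [Field k']
variable (MK : ValuedDiffField K Γ k) (ME : ValuedDiffField E ΓE kE)
variable (MK' : ValuedDiffField K' Γ' k')
variable (i : VDFEmbedding ME MK) (i' : VDFEmbedding ME MK') (a : K) (b : K')

/-- The transported value of a representation. -/
noncomputable def tval (N : ℕ) {n : ℕ} (P Q : MvPolynomial (Fin (n + 1)) E) : K' :=
  (⇑MK'.σ.symm)^[N] (ψh MK' ME i' b n P / ψh MK' ME i' b n Q)

lemma tval_shIter (N : ℕ) {n : ℕ} (P Q : MvPolynomial (Fin (n + 1)) E) (j : ℕ) :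
    tval ME MK' i' b (j + N) (shIter ME j P) (shIter ME j Q) = tval ME MK' i' b N P Q := by
  unfold tval
  rw [ψ_shIter, ψ_shIter, ← iter_map_div, add_comm j N, symm_iter_add_cancel]

lemma tval_cast (N : ℕ) {n m : ℕ} (h : n ≤ m) (P Q : MvPolynomial (Fin (n + 1)) E) :
    tval ME MK' i' b N (castP h P) (castP h Q) = tval ME MK' i' b N P Q := by
  unfold tval
  rw [ψ_cast, ψ_cast]

variable (ha : 0 ≤ MK.v a) (htr : SigmaTranscendentalOver i.toRes (⇑MK.σr) (MK.π a))
variable (hb : 0 ≤ MK'.v b) (htr' : SigmaTranscendentalOver i'.toRes (⇑MK'.σr) (MK'.π b))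

include ha htr hb htr' in
lemma tval_same_level {x : K} {N n : ℕ} {P₁ Q₁ P₂ Q₂ : MvPolynomial (Fin (n + 1)) E}
    (hQ₁ : Q₁ ≠ 0) (he₁ : (⇑MK.σ)^[N] x * ψh MK ME i a n Q₁ = ψh MK ME i a n P₁)
    (hQ₂ : Q₂ ≠ 0) (he₂ : (⇑MK.σ)^[N] x * ψh MK ME i a n Q₂ = ψh MK ME i a n P₂) :
    tval ME MK' i' b N P₁ Q₁ = tval ME MK' i' b N P₂ Q₂ := by
  have hcross : P₁ * Q₂ = P₂ * Q₁ := by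
    apply ψ_inj MK ME i a ha htr
    rw [map_mul, map_mul, ← he₁, ← he₂]
    ring
  have hψQ₁ : ψh MK' ME i' b n Q₁ ≠ 0 := ψ_ne_zero MK' ME i' b hb htr' hQ₁
  have hψQ₂ : ψh MK' ME i' b n Q₂ ≠ 0 := ψ_ne_zero MK' ME i' b hb htr' hQ₂
  unfold tval
  congr 1
  rw [div_eq_div_iff hψQ₁ hψQ₂, ← map_mul, ← map_mul, hcross]

include ha htr hb htr' in
lemma tval_welldef {x : K} {N₁ n₁ N₂ n₂ : ℕ}
    {P₁ Q₁ : MvPolynomial (Fin (n₁ + 1)) E} {P₂ Q₂ : MvPolynomial (Fin (n₂ + 1)) E}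
    (hQ₁ : Q₁ ≠ 0) (he₁ : (⇑MK.σ)^[N₁] x * ψh MK ME i a n₁ Q₁ = ψh MK ME i a n₁ P₁)
    (hQ₂ : Q₂ ≠ 0) (he₂ : (⇑MK.σ)^[N₂] x * ψh MK ME i a n₂ Q₂ = ψh MK ME i a n₂ P₂) :
    tval ME MK' i' b N₁ P₁ Q₁ = tval ME MK' i' b N₂ P₂ Q₂ := by
  set N := max N₁ N₂
  set j₁ := N - N₁
  set j₂ := N - N₂
  have hN₁ : j₁ + N₁ = N := by omega
  have hN₂ : j₂ + N₂ = N := by omega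
  set m := max (n₁ + j₁) (n₂ + j₂)
  have hm₁ : n₁ + j₁ ≤ m := le_max_left _ _
  have hm₂ : n₂ + j₂ ≤ m := le_max_right _ _
  -- upgraded representations
  have hu₁ := rep_shIter_eq MK ME i a he₁ j₁
  have hu₂ := rep_shIter_eq MK ME i a he₂ j₂
  rw [hN₁] at hu₁
  rw [hN₂] at hu₂
  have hc₁ : (⇑MK.σ)^[N] x * ψh MK ME i a m (castP hm₁ (shIter ME j₁ Q₁)) =
      ψh MK ME i a m (castP hm₁ (shIter ME j₁ P₁)) := by
    rw [ψ_cast, ψ_cast]; exact hu₁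
  have hc₂ : (⇑MK.σ)^[N] x * ψh MK ME i a m (castP hm₂ (shIter ME j₂ Q₂)) =
      ψh MK ME i a m (castP hm₂ (shIter ME j₂ P₂)) := by
    rw [ψ_cast, ψ_cast]; exact hu₂
  calc tval ME MK' i' b N₁ P₁ Q₁
      = tval ME MK' i' b N (shIter ME j₁ P₁) (shIter ME j₁ Q₁) := by
        rw [← tval_shIter ME MK' i' b N₁ P₁ Q₁ j₁, hN₁]
    _ = tval ME MK' i' b N (castP hm₁ (shIter ME j₁ P₁)) (castP hm₁ (shIter ME j₁ Q₁)) := by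
        rw [tval_cast]
    _ = tval ME MK' i' b N (castP hm₂ (shIter ME j₂ P₂)) (castP hm₂ (shIter ME j₂ Q₂)) :=
        tval_same_level MK ME MK' i i' a b ha htr hb htr'
          (castP_ne_zero hm₁ (shIter_ne_zero ME j₁ hQ₁)) hc₁
          (castP_ne_zero hm₂ (shIter_ne_zero ME j₂ hQ₂)) hc₂
    _ = tval ME MK' i' b N (shIter ME j₂ P₂) (shIter ME j₂ Q₂) := by
        rw [tval_cast]
    _ = tval ME MK' i' b N₂ P₂ Q₂ := by
        rw [← tval_shIter ME MK' i' b N₂ P₂ Q₂ j₂, hN₂]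

open Classical in
/-- The transported element, defined by choice of a representation. -/
noncomputable def gfun (x : K) : K' :=
  if h : HasRep MK ME i a x then
    tval ME MK' i' b h.choose h.choose_spec.choose_spec.choose
      h.choose_spec.choose_spec.choose_spec.choose
  else 0

include ha htr hb htr' in
lemma gfun_eq {x : K} {N n : ℕ} {P Q : MvPolynomial (Fin (n + 1)) E}
    (hQ : Q ≠ 0) (he : (⇑MK.σ)^[N] x * ψh MK ME i a n Q = ψh MK ME i a n P) :
    gfun MK ME MK' i i' a b x = tval ME MK' i' b N P Q := by
  have h : HasRep MK ME i a x := ⟨N, n, P, Q, hQ, he⟩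
  rw [gfun, dif_pos h]
  obtain ⟨hQ', he'⟩ := h.choose_spec.choose_spec.choose_spec.choose_spec
  exact tval_welldef MK ME MK' i i' a b ha htr hb htr' hQ' he' hQ he

include ha htr hb htr' in
lemma gfun_one : gfun MK ME MK' i i' a b 1 = 1 := by
  have he : (⇑MK.σ)^[0] (1 : K) * ψh MK ME i a 0 1 = ψh MK ME i a 0 1 := by
    simp
  rw [gfun_eq MK ME MK' i i' a b ha htr hb htr' one_ne_zero he]
  unfold tval
  simp

include ha htr hb htr' in
lemma gfun_zero : gfun MK ME MK' i i' a b 0 = 0 := by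
  have he : (⇑MK.σ)^[0] (0 : K) * ψh MK ME i a 0 1 = ψh MK ME i a 0 0 := by
    simp
  rw [gfun_eq MK ME MK' i i' a b ha htr hb htr' one_ne_zero he]
  unfold tval
  simp

include ha htr hb htr' in
lemma gfun_E (e : E) : gfun MK ME MK' i i' a b (i.toField e) = i'.toField e := by
  have he : (⇑MK.σ)^[0] (i.toField e) * ψh MK ME i a 0 1 =
      ψh MK ME i a 0 (MvPolynomial.C e) := by
    rw [map_one, mul_one, ψ_C]; rfl
  rw [gfun_eq MK ME MK' i i' a b ha htr hb htr' one_ne_zero he]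
  unfold tval
  rw [ψ_C, map_one, div_one]
  rfl

include ha htr hb htr' in
lemma gfun_a : gfun MK ME MK' i i' a b a = b := by
  have he : (⇑MK.σ)^[0] a * ψh MK ME i a 0 1 = ψh MK ME i a 0 (MvPolynomial.X 0) := by
    rw [map_one, mul_one, ψ_X]; rfl
  rw [gfun_eq MK ME MK' i i' a b ha htr hb htr' one_ne_zero he]
  unfold tval
  rw [ψ_X, map_one, div_one]
  rfl

include ha htr hb htr' in
lemma gfun_mul {x y : K} (hx : HasRep MK ME i a x) (hy : HasRep MK ME i a y) :
    gfun MK ME MK' i i' a b (x * y) =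
      gfun MK ME MK' i i' a b x * gfun MK ME MK' i i' a b y := by
  obtain ⟨N, n, ⟨P, Q, hQ, heP⟩, ⟨P', Q', hQ', heP'⟩⟩ := repAt_common MK ME i a hx hy
  have hexy : (⇑MK.σ)^[N] (x * y) * ψh MK ME i a n (Q * Q') =
      ψh MK ME i a n (P * P') := by
    rw [iter_map_mul, map_mul, map_mul, ← heP, ← heP']; ring
  rw [gfun_eq MK ME MK' i i' a b ha htr hb htr' (mul_ne_zero hQ hQ') hexy,
    gfun_eq MK ME MK' i i' a b ha htr hb htr' hQ heP,
    gfun_eq MK ME MK' i i' a b ha htr hb htr' hQ' heP']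
  unfold tval
  rw [map_mul, map_mul, ← symm_iter_map_mul]
  congr 1
  rw [div_mul_div_comm]

include ha htr hb htr' in
lemma gfun_add {x y : K} (hx : HasRep MK ME i a x) (hy : HasRep MK ME i a y) :
    gfun MK ME MK' i i' a b (x + y) =
      gfun MK ME MK' i i' a b x + gfun MK ME MK' i i' a b y := by
  obtain ⟨N, n, ⟨P, Q, hQ, heP⟩, ⟨P', Q', hQ', heP'⟩⟩ := repAt_common MK ME i a hx hy
  have hexy : (⇑MK.σ)^[N] (x + y) * ψh MK ME i a n (Q * Q') =
      ψh MK ME i a n (P * Q' + P' * Q) := by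
    rw [iter_map_add, map_add, map_mul, map_mul, map_mul, ← heP, ← heP']; ring
  rw [gfun_eq MK ME MK' i i' a b ha htr hb htr' (mul_ne_zero hQ hQ') hexy,
    gfun_eq MK ME MK' i i' a b ha htr hb htr' hQ heP,
    gfun_eq MK ME MK' i i' a b ha htr hb htr' hQ' heP']
  unfold tval
  rw [map_add, map_mul, map_mul, map_mul, ← symm_iter_map_add]
  congr 1
  rw [div_add_div _ _ (ψ_ne_zero MK' ME i' b hb htr' hQ)
    (ψ_ne_zero MK' ME i' b hb htr' hQ')]
  ring_nf

include ha htr hb htr' in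
lemma gfun_σ {x : K} (hx : HasRep MK ME i a x) :
    gfun MK ME MK' i i' a b (MK.σ x) = MK'.σ (gfun MK ME MK' i i' a b x) := by
  obtain ⟨N, n, P, Q, hQ, he⟩ := hx
  have heσ : (⇑MK.σ)^[N] (MK.σ x) * ψh MK ME i a (n + 1) (shP ME Q) =
      ψh MK ME i a (n + 1) (shP ME P) := by
    rw [ψ_sh, ψ_sh, ← Function.iterate_succ_apply, Function.iterate_succ_apply',
      ← map_mul, he]
  rw [gfun_eq MK ME MK' i i' a b ha htr hb htr' (shP_ne_zero ME hQ) heσ,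
    gfun_eq MK ME MK' i i' a b ha htr hb htr' hQ he]
  unfold tval
  rw [ψ_sh, ψ_sh, ← map_div₀, symm_iter_comm]

include ha htr hb htr' in
lemma gfun_mem {x : K} (hx : x ∈ genDiffSubfield MK.σ (Set.range i.toField) a) :
    gfun MK ME MK' i i' a b x ∈ genDiffSubfield MK'.σ (Set.range i'.toField) b := by
  obtain ⟨N, n, P, Q, hQ, he⟩ := mem_hasRep MK ME i a ha htr hx
  rw [gfun_eq MK ME MK' i i' a b ha htr hb htr' hQ he]
  unfold tval
  apply A_σ_symm_iter_mem MK' ME i' b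
  exact Subfield.div_mem _ (ψ_mem MK' ME i' b P) (ψ_mem MK' ME i' b Q)

include ha htr hb htr' in
lemma gfun_surjOn {y : K'} (hy : y ∈ genDiffSubfield MK'.σ (Set.range i'.toField) b) :
    ∃ x ∈ genDiffSubfield MK.σ (Set.range i.toField) a,
      gfun MK ME MK' i i' a b x = y := by
  obtain ⟨N, n, P, Q, hQ, he⟩ := mem_hasRep MK' ME i' b hb htr' hy
  have hψQ : ψh MK ME i a n Q ≠ 0 := ψ_ne_zero MK ME i a ha htr hQ
  have hψ'Q : ψh MK' ME i' b n Q ≠ 0 := ψ_ne_zero MK' ME i' b hb htr' hQ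
  set x := (⇑MK.σ.symm)^[N] (ψh MK ME i a n P / ψh MK ME i a n Q) with hxdef
  have hxA : x ∈ genDiffSubfield MK.σ (Set.range i.toField) a :=
    A_σ_symm_iter_mem MK ME i a
      (Subfield.div_mem _ (ψ_mem MK ME i a P) (ψ_mem MK ME i a Q)) N
  have hrepx : (⇑MK.σ)^[N] x * ψh MK ME i a n Q = ψh MK ME i a n P := by
    rw [hxdef, iter_symm_cancel, div_mul_cancel₀ _ hψQ]
  refine ⟨x, hxA, ?_⟩
  rw [gfun_eq MK ME MK' i i' a b ha htr hb htr' hQ hrepx]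
  unfold tval
  rw [← he, mul_div_cancel_right₀ _ hψ'Q, symm_iter_cancel]

include ha htr in
lemma ψ_val_E {n : ℕ} (F : MvPolynomial (Fin (n + 1)) E) :
    MK.v (ψh MK ME i a n F) =
      WithTop.map i.toGroup (F.support.inf fun d => ME.v (F.coeff d)) := by
  rw [key_val MK ME i a ha htr F, withTop_map_inf i.toGroup i.toGroup_mono.monotone]
  exact Finset.inf_congr rfl fun d _ => i.comm_v _

include ha htr hb htr' in
lemma ψ_le_transfer {n : ℕ} (F G : MvPolynomial (Fin (n + 1)) E) :
    MK.v (ψh MK ME i a n F) ≤ MK.v (ψh MK ME i a n G) ↔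
      MK'.v (ψh MK' ME i' b n F) ≤ MK'.v (ψh MK' ME i' b n G) := by
  rw [ψ_val_E MK ME i a ha htr F, ψ_val_E MK ME i a ha htr G,
    ψ_val_E MK' ME i' b hb htr' F, ψ_val_E MK' ME i' b hb htr' G,
    map_toGroup_le_iff, map_toGroup_le_iff]

include ha htr hb htr' in
lemma gfun_v_le_iff {x y : K} (hx : HasRep MK ME i a x) (hy : HasRep MK ME i a y) :
    MK.v x ≤ MK.v y ↔
      MK'.v (gfun MK ME MK' i i' a b x) ≤ MK'.v (gfun MK ME MK' i i' a b y) := by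
  obtain ⟨N, n, ⟨P, Q, hQ, heP⟩, ⟨P', Q', hQ', heP'⟩⟩ := repAt_common MK ME i a hx hy
  have hψQ : ψh MK ME i a n Q ≠ 0 := ψ_ne_zero MK ME i a ha htr hQ
  have hψQ' : ψh MK ME i a n Q' ≠ 0 := ψ_ne_zero MK ME i a ha htr hQ'
  have hψ'Q : ψh MK' ME i' b n Q ≠ 0 := ψ_ne_zero MK' ME i' b hb htr' hQ
  have hψ'Q' : ψh MK' ME i' b n Q' ≠ 0 := ψ_ne_zero MK' ME i' b hb htr' hQ'
  have h1 : MK.v x + MK.v (ψh MK ME i a n Q) = MK.v (ψh MK ME i a n P) := by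
    rw [← MK.v_iter x N, ← MK.v_mul, heP]
  have h2 : MK.v y + MK.v (ψh MK ME i a n Q') = MK.v (ψh MK ME i a n P') := by
    rw [← MK.v_iter y N, ← MK.v_mul, heP']
  have h1' : MK'.v (gfun MK ME MK' i i' a b x) + MK'.v (ψh MK' ME i' b n Q) =
      MK'.v (ψh MK' ME i' b n P) := by
    rw [gfun_eq MK ME MK' i i' a b ha htr hb htr' hQ heP]
    unfold tval
    rw [MK'.v_symm_iter]
    exact v_div_add MK'.toValuedField _ _ hψ'Q
  have h2' : MK'.v (gfun MK ME MK' i i' a b y) + MK'.v (ψh MK' ME i' b n Q') =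
      MK'.v (ψh MK' ME i' b n P') := by
    rw [gfun_eq MK ME MK' i i' a b ha htr hb htr' hQ' heP']
    unfold tval
    rw [MK'.v_symm_iter]
    exact v_div_add MK'.toValuedField _ _ hψ'Q'
  have hQne : MK.v (ψh MK ME i a n Q) ≠ ⊤ := MK.toValuedField.v_ne_top hψQ
  have hQ'ne : MK.v (ψh MK ME i a n Q') ≠ ⊤ := MK.toValuedField.v_ne_top hψQ'
  have h'Qne : MK'.v (ψh MK' ME i' b n Q) ≠ ⊤ := MK'.toValuedField.v_ne_top hψ'Q
  have h'Q'ne : MK'.v (ψh MK' ME i' b n Q') ≠ ⊤ := MK'.toValuedField.v_ne_top hψ'Q'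
  have claimA : MK.v x ≤ MK.v y ↔
      MK.v (ψh MK ME i a n (P * Q')) ≤ MK.v (ψh MK ME i a n (P' * Q)) := by
    rw [map_mul, map_mul, MK.v_mul, MK.v_mul, ← h1, ← h2]
    have e1 : MK.v x + MK.v (ψh MK ME i a n Q) + MK.v (ψh MK ME i a n Q') =
        MK.v x + (MK.v (ψh MK ME i a n Q) + MK.v (ψh MK ME i a n Q')) := by
      rw [add_assoc]
    have e2 : MK.v y + MK.v (ψh MK ME i a n Q') + MK.v (ψh MK ME i a n Q) =
        MK.v y + (MK.v (ψh MK ME i a n Q) + MK.v (ψh MK ME i a n Q')) := by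
      rw [add_assoc, add_comm (MK.v (ψh MK ME i a n Q')) (MK.v (ψh MK ME i a n Q))]
    rw [e1, e2]
    exact (WithTop.add_le_add_iff_right (WithTop.add_ne_top.2 ⟨hQne, hQ'ne⟩)).symm
  have claimA' : MK'.v (gfun MK ME MK' i i' a b x) ≤ MK'.v (gfun MK ME MK' i i' a b y) ↔
      MK'.v (ψh MK' ME i' b n (P * Q')) ≤ MK'.v (ψh MK' ME i' b n (P' * Q)) := by
    rw [map_mul, map_mul, MK'.v_mul, MK'.v_mul, ← h1', ← h2']
    have e1 : MK'.v (gfun MK ME MK' i i' a b x) + MK'.v (ψh MK' ME i' b n Q) +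
        MK'.v (ψh MK' ME i' b n Q') = MK'.v (gfun MK ME MK' i i' a b x) +
        (MK'.v (ψh MK' ME i' b n Q) + MK'.v (ψh MK' ME i' b n Q')) := by
      rw [add_assoc]
    have e2 : MK'.v (gfun MK ME MK' i i' a b y) + MK'.v (ψh MK' ME i' b n Q') +
        MK'.v (ψh MK' ME i' b n Q) = MK'.v (gfun MK ME MK' i i' a b y) +
        (MK'.v (ψh MK' ME i' b n Q) + MK'.v (ψh MK' ME i' b n Q')) := by
      rw [add_assoc, add_comm (MK'.v (ψh MK' ME i' b n Q')) (MK'.v (ψh MK' ME i' b n Q))]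
    rw [e1, e2]
    exact (WithTop.add_le_add_iff_right (WithTop.add_ne_top.2 ⟨h'Qne, h'Q'ne⟩)).symm
  rw [claimA, claimA',
    ψ_le_transfer MK ME MK' i i' a b ha htr hb htr' (P * Q') (P' * Q)]

end Iso

/-- Lemma 2.4 ("extrest"): residue-transcendental elements.
`E` is a common valued difference subfield of `K` and `K'` via the embeddings
`i`, `i'`; `a ∈ O_K` has residue `α = π a` σ̄-transcendental over `k_E`. -/
theorem stmt1 {K : Type u} {Γ : Type v} {k : Type w}
    {K' : Type u} {Γ' : Type v} {k' : Type w}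
    {E : Type u} {ΓE : Type v} {kE : Type w}
    [Field K] [AddCommGroup Γ] [LinearOrder Γ] [IsOrderedAddMonoid Γ] [Field k]
    [Field K'] [AddCommGroup Γ'] [LinearOrder Γ'] [IsOrderedAddMonoid Γ'] [Field k']
    [Field E] [AddCommGroup ΓE] [LinearOrder ΓE] [IsOrderedAddMonoid ΓE] [Field kE]
    (MK : ValuedDiffField K Γ k) (MK' : ValuedDiffField K' Γ' k')
    (ME : ValuedDiffField E ΓE kE)
    (i : VDFEmbedding ME MK) (i' : VDFEmbedding ME MK')
    (a : K) (ha : 0 ≤ MK.v a)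
    (htr : SigmaTranscendentalOver i.toRes (⇑MK.σr) (MK.π a)) :
    -- (i)  v (P a) = min over the coefficients of v
    (∀ (n : ℕ) (f : MvPolynomial (Fin (n + 1)) E),
      MK.v (evalDiff (⇑MK.σ) (MvPolynomial.map i.toField f) a) =
        f.support.inf fun d => MK.v (i.toField (f.coeff d))) ∧
    -- (ii) value group of E⟨a⟩ equals that of E …
    ({γ : WithTop Γ | ∃ x ∈ genDiffSubfield MK.σ (Set.range i.toField) a,
        x ≠ 0 ∧ MK.v x = γ} =
      {γ : WithTop Γ | ∃ e : E, e ≠ 0 ∧ MK.v (i.toField e) = γ}) ∧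
    -- … and the residue field of E⟨a⟩ is k_E⟨α⟩
    ({y : k | ∃ x ∈ genDiffSubfield MK.σ (Set.range i.toField) a,
        0 ≤ MK.v x ∧ MK.π x = y} =
      (genDiffSubfield MK.σr (Set.range i.toRes) (MK.π a) : Set k)) ∧
    -- (iii) isomorphism over E
    (∀ b : K', 0 ≤ MK'.v b →
      SigmaTranscendentalOver i'.toRes (⇑MK'.σr) (MK'.π b) →
      ∃ g : (genDiffSubfield MK.σ (Set.range i.toField) a) →+* K',
        IsValDiffIsoOver MK.v MK'.v i.toField i'.toField (⇑MK.σ) (⇑MK'.σ)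
          (genDiffSubfield MK.σ (Set.range i.toField) a)
          (genDiffSubfield MK'.σ (Set.range i'.toField) b) a b g) := by
  refine ⟨?_, ?_, ?_, ?_⟩
  · intro n f
    rw [← ψh_eq MK ME i a f]
    exact key_val MK ME i a ha htr f
  · ext γ
    simp only [Set.mem_setOf_eq]
    constructor
    · rintro ⟨x, hxA, hx0, rfl⟩
      obtain ⟨e, he0, heq⟩ := val_of_mem MK ME i a ha htr hxA hx0
      exact ⟨e, he0, heq.symm⟩
    · rintro ⟨e, he0, rfl⟩
      exact ⟨i.toField e, Subfield.subset_closure (Or.inl ⟨e, rfl⟩),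
        fun h => he0 (toField_inj MK ME i (by rw [h, map_zero])), rfl⟩
  · ext y
    simp only [Set.mem_setOf_eq, SetLike.mem_coe]
    constructor
    · rintro ⟨x, hxA, hv, rfl⟩
      exact res_of_mem MK ME i a ha htr hxA hv
    · intro hy
      exact mem_res_of_Ak MK ME i a ha hy
  · intro b hb htrb
    have hasrep : ∀ x : (genDiffSubfield MK.σ (Set.range i.toField) a),
        HasRep MK ME i a (x : K) := fun x => mem_hasRep MK ME i a ha htr x.2
    refine ⟨{
      toFun := fun x => gfun MK ME MK' i i' a b (x : K)
      map_one' := gfun_one MK ME MK' i i' a b ha htr hb htrb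
      map_mul' := fun x y =>
        gfun_mul MK ME MK' i i' a b ha htr hb htrb (hasrep x) (hasrep y)
      map_zero' := gfun_zero MK ME MK' i i' a b ha htr hb htrb
      map_add' := fun x y =>
        gfun_add MK ME MK' i i' a b ha htr hb htrb (hasrep x) (hasrep y) },
      ⟨?_, ?_, ?_, ?_⟩, ?_⟩
    · ext y
      constructor
      · rintro ⟨x, rfl⟩
        exact gfun_mem MK ME MK' i i' a b ha htr hb htrb x.2
      · intro hy
        obtain ⟨x, hxA, hgx⟩ := gfun_surjOn MK ME MK' i i' a b ha htr hb htrb hy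
        exact ⟨⟨x, hxA⟩, hgx⟩
    · intro e he
      exact gfun_E MK ME MK' i i' a b ha htr hb htrb e
    · intro ha'
      exact gfun_a MK ME MK' i i' a b ha htr hb htrb
    · intro x hx
      exact gfun_σ MK ME MK' i i' a b ha htr hb htrb (hasrep x)
    · intro x y
      exact gfun_v_le_iff MK ME MK' i i' a b ha htr hb htrb (hasrep x) (hasrep y)

end VDFPaper
end

section
/- Let K be a valued difference field that is a Witt case for the prime p, with valuation ring O and residue field k. Then: (a) there is a unique sequence of maps ∂₀, ∂₁, ∂₂, … : O → O with ∂₀ = id such that for all a ∈ O and all n, σ^n(a) = ∂₀(a)^{p^n} + p·∂₁(a)^{p^{n−1}} + ⋯ + p^n·∂ₙ(a); (b) for each n, identifying W[k]/(p^{n+1}) with the ring of p-typical Witt vectors of length n+1 over k, the map O → W[k]/(p^{n+1}) sending a to (∂₀(a)¯, ∂₁(a)¯, …, ∂ₙ(a)¯) is a surjective ring homomorphism with kernel p^{n+1}·O. -/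
/-!
Common definitions: three-sorted valued (difference) fields, σ-polynomials,
pc-sequences, axioms from the paper.
-/

namespace VDFPaper

universe u v w

section Witt
variable {K : Type u} {Γ : Type v} {k : Type w}
  [Field K] [AddCommGroup Γ] [LinearOrder Γ] [IsOrderedAddMonoid Γ] [Field k]
  (M : ValuedDiffField K Γ k)

lemma v_zero' : M.v 0 = ⊤ := (M.v_top_iff 0).mpr rfl

lemma v_one' : M.v 1 = 0 := by
  have h := M.v_mul 1 1
  rw [one_mul] at h
  have h1 : M.v 1 ≠ ⊤ := fun ht => one_ne_zero ((M.v_top_iff 1).mp ht)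
  obtain ⟨g, hg⟩ := WithTop.ne_top_iff_exists.mp h1
  rw [← hg] at h ⊢
  norm_cast at h ⊢
  exact left_eq_add.mp h

lemma v_neg' (a : K) : M.v (-a) = M.v a := by
  have hm : M.v (-1 : K) = 0 := by
    have h := M.v_mul (-1) (-1)
    rw [neg_mul_neg, one_mul, v_one' M] at h
    have h1 : M.v (-1 : K) ≠ ⊤ := fun ht => neg_ne_zero.mpr one_ne_zero ((M.v_top_iff _).mp ht)
    obtain ⟨g, hg⟩ := WithTop.ne_top_iff_exists.mp h1
    rw [← hg] at h ⊢
    norm_cast at h ⊢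
    rcases lt_trichotomy g 0 with hg|hg|hg
    · exact absurd h (ne_of_lt (add_neg hg hg))
    · exact hg
    · exact absurd h (ne_of_gt (add_pos hg hg))
  calc M.v (-a) = M.v ((-1) * a) := by rw [neg_one_mul]
  _ = 0 + M.v a := by rw [M.v_mul, hm]
  _ = M.v a := zero_add _

lemma v_sub_le (a b : K) : min (M.v a) (M.v b) ≤ M.v (a - b) := by
  rw [sub_eq_add_neg]
  calc min (M.v a) (M.v b) = min (M.v a) (M.v (-b)) := by rw [v_neg']
  _ ≤ _ := M.v_add a (-b)

/-- The valuation ring as a subring. -/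
def Oring : Subring K where
  carrier := {x : K | 0 ≤ M.v x}
  mul_mem' {a b} ha hb := by
    show (0 : WithTop Γ) ≤ M.v (a * b)
    rw [M.v_mul]
    calc (0 : WithTop Γ) = 0 + 0 := (add_zero 0).symm
    _ ≤ M.v a + M.v b := add_le_add ha hb
  one_mem' := by show (0 : WithTop Γ) ≤ M.v 1; rw [v_one']
  add_mem' {a b} ha hb := le_trans (le_min ha hb) (M.v_add a b)
  zero_mem' := by show (0 : WithTop Γ) ≤ M.v 0; rw [v_zero']; exact le_top
  neg_mem' {a} ha := by show (0 : WithTop Γ) ≤ M.v (-a); rwa [v_neg']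

example : ↥(Oring M) = {x : K // 0 ≤ M.v x} := rfl

lemma mem_Oring {x : K} : x ∈ Oring M ↔ 0 ≤ M.v x := Iff.rfl

lemma π_zero' : M.π 0 = 0 := by
  rw [M.π_eq_zero_iff 0 (by rw [v_zero']; exact le_top), v_zero']
  exact WithTop.coe_lt_top 0

/-- Residue map as ring hom on the valuation ring. -/
def resHom : Oring M →+* k where
  toFun a := M.π a
  map_one' := M.π_one
  map_mul' a b := M.π_mul a b a.2 b.2
  map_zero' := π_zero' M
  map_add' a b := M.π_add a b a.2 b.2

lemma resHom_apply (a : Oring M) : resHom M a = M.π a := rfl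

/-- σ as a ring hom on the valuation ring. -/
def sigO : Oring M →+* Oring M where
  toFun a := ⟨M.σ (a : K), by show (0:WithTop Γ) ≤ _; rw [M.v_σ]; exact a.2⟩
  map_one' := by ext; show M.σ ((1 : Oring M) : K) = 1; rw [OneMemClass.coe_one, map_one]
  map_mul' a b := by
    ext; show M.σ ((a * b : Oring M) : K) = M.σ (a:K) * M.σ (b:K)
    rw [MulMemClass.coe_mul, map_mul]
  map_zero' := by ext; show M.σ ((0 : Oring M) : K) = 0; rw [ZeroMemClass.coe_zero, map_zero]
  map_add' a b := by
    ext; show M.σ ((a + b : Oring M) : K) = M.σ (a:K) + M.σ (b:K)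
    rw [AddMemClass.coe_add, map_add]


section PDsec
variable (p : ℕ)

/-- `x` is divisible by `p^j` with quotient in the valuation ring. -/
def PD (j : ℕ) (x : K) : Prop := ∃ c : K, 0 ≤ M.v c ∧ x = (p : K) ^ j * c

variable {M p}

lemma inO_natCast (m : ℕ) : 0 ≤ M.v (m : K) := natCast_mem (Oring M) m

lemma inO_ppow (j : ℕ) : 0 ≤ M.v ((p : K) ^ j) :=
  (Oring M).pow_mem (natCast_mem (Oring M) p) j

lemma PD.inO {j : ℕ} {x : K} (h : PD M p j x) : 0 ≤ M.v x := by
  obtain ⟨c, hc, rfl⟩ := h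
  exact (Oring M).mul_mem (inO_ppow j) hc

lemma PD.zero (j : ℕ) : PD M p j (0 : K) :=
  ⟨0, by rw [v_zero']; exact le_top, by ring⟩

lemma PD.add {j : ℕ} {x y : K} (hx : PD M p j x) (hy : PD M p j y) : PD M p j (x + y) := by
  obtain ⟨c, hc, rfl⟩ := hx
  obtain ⟨d, hd, rfl⟩ := hy
  exact ⟨c + d, (Oring M).add_mem hc hd, by ring⟩

lemma PD.of_inO {x : K} (h : 0 ≤ M.v x) : PD M p 0 x :=
  ⟨x, h, by rw [pow_zero, one_mul]⟩

lemma PD.mono {j j' : ℕ} {x : K} (h : j' ≤ j) (hx : PD M p j x) : PD M p j' x := by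
  obtain ⟨c, hc, rfl⟩ := hx
  exact ⟨(p : K) ^ (j - j') * c, (Oring M).mul_mem (inO_ppow _) hc,
    by rw [← mul_assoc, ← pow_add]; congr 2; omega⟩

lemma PD.mul {i j : ℕ} {x y : K} (hx : PD M p i x) (hy : PD M p j y) :
    PD M p (i + j) (x * y) := by
  obtain ⟨c, hc, rfl⟩ := hx
  obtain ⟨d, hd, rfl⟩ := hy
  exact ⟨c * d, (Oring M).mul_mem hc hd, by rw [pow_add]; ring⟩

lemma PD.mul_left {j : ℕ} {x y : K} (hy : 0 ≤ M.v y) (hx : PD M p j x) :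
    PD M p j (y * x) := by
  obtain ⟨c, hc, rfl⟩ := hx
  exact ⟨y * c, (Oring M).mul_mem hy hc, by ring⟩

lemma PD.ppow_mul {j : ℕ} (i : ℕ) {x : K} (hx : PD M p j x) :
    PD M p (i + j) ((p : K) ^ i * x) :=
  PD.mul ⟨1, by rw [v_one'], by rw [mul_one]⟩ hx

lemma PD.sum {j : ℕ} {ι : Type*} (s : Finset ι) (f : ι → K)
    (h : ∀ i ∈ s, PD M p j (f i)) : PD M p j (∑ i ∈ s, f i) := by
  classical
  induction s using Finset.induction_on with
  | empty => simpa using PD.zero j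
  | insert _ _ hni ih =>
    rw [Finset.sum_insert hni]
    exact (h _ (Finset.mem_insert_self _ _)).add
      (ih fun i hi => h i (Finset.mem_insert_of_mem hi))

lemma PD.sub {j : ℕ} {x y : K} (hx : PD M p j x) (hy : PD M p j y) : PD M p j (x - y) := by
  obtain ⟨c, hc, rfl⟩ := hx
  obtain ⟨d, hd, rfl⟩ := hy
  exact ⟨c - d, (Oring M).sub_mem hc hd, by ring⟩

end PDsec

section WittMain
variable {M} {p : ℕ} (hp : p.Prime) (hK0 : ringChar K = 0)
  {e : Γ} (he0 : 0 < e) (hmin : ∀ γ : Γ, 0 < γ → e ≤ γ) (hvp : M.v (p : K) = (e : WithTop Γ))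

include hp hK0 in
lemma pK_ne : (p : K) ≠ 0 := by
  haveI : CharP K 0 := hK0 ▸ ringChar.charP K
  haveI : CharZero K := CharP.charP_to_charZero K
  exact Nat.cast_ne_zero.mpr hp.ne_zero

include hvp he0 in
lemma v_p_pos : 0 < M.v ((p : K)) := by
  rw [hvp]
  exact_mod_cast he0

include hvp hmin in
lemma PD_one_of_pos {x : K} (hx0 : 0 < M.v x) : PD M p 1 x := by
  rcases eq_or_ne x 0 with rfl | hx
  · exact PD.zero 1
  · refine ⟨x / (p : K), ?_, ?_⟩
    · -- 0 ≤ v (x / p)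
      have hp0 : (p : K) ≠ 0 := by
        intro h
        rw [h, v_zero'] at hvp
        exact (WithTop.coe_ne_top (a := e)) hvp.symm
      have hmul : M.v ((p : K) * (x / (p : K))) = M.v (p : K) + M.v (x / (p : K)) :=
        M.v_mul _ _
      rw [mul_div_cancel₀ x hp0] at hmul
      by_contra hneg
      push_neg at hneg
      -- v x = v p + v (x/p) < v p ≤ v x, contradiction with hx0, minimality
      have hvx : M.v x ≠ ⊤ := fun h => hx ((M.v_top_iff x).mp h)
      obtain ⟨γ, hγ⟩ := WithTop.ne_top_iff_exists.mp hvx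
      have hγpos : 0 < γ := by
        have := hx0; rw [← hγ] at this; exact_mod_cast this
      have hle : (e : WithTop Γ) ≤ M.v x := by
        rw [← hγ]; exact_mod_cast hmin γ hγpos
      have hlt : M.v x < (e : WithTop Γ) := by
        calc M.v x = M.v (p : K) + M.v (x / (p : K)) := hmul
        _ < M.v (p : K) + 0 := by
            apply WithTop.add_lt_add_left
            · rw [hvp]; exact WithTop.coe_ne_top
            · exact hneg
        _ = (e : WithTop Γ) := by rw [add_zero, hvp]
      exact absurd (lt_of_le_of_lt hle hlt) (lt_irrefl _)
    · rw [pow_one, mul_div_cancel₀ x (by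
        intro h
        rw [h, v_zero'] at hvp
        exact (WithTop.coe_ne_top (a := e)) hvp.symm)]

include hvp he0 in
lemma PD.pos {x : K} (hx : PD M p 1 x) : x = 0 ∨ 0 < M.v x := by
  rcases eq_or_ne x 0 with rfl | hx0
  · exact Or.inl rfl
  · right
    obtain ⟨c, hc, rfl⟩ := hx
    rw [pow_one, M.v_mul]
    calc (0 : WithTop Γ) < M.v (p : K) := v_p_pos he0 hvp
    _ = M.v (p : K) + 0 := (add_zero _).symm
    _ ≤ M.v (p : K) + M.v c := add_le_add le_rfl hc

include hvp he0 in
lemma PD.v_pos {x : K} (hx : PD M p 1 x) : 0 < M.v x := by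
  rcases PD.pos he0 hvp hx with rfl | h
  · rw [v_zero']; exact WithTop.coe_lt_top 0
  · exact h

/-- residue computations -/
lemma π_sub' {x y : K} (hx : 0 ≤ M.v x) (hy : 0 ≤ M.v y) :
    M.π (x - y) = M.π x - M.π y := by
  have : (⟨x, hx⟩ - ⟨y, hy⟩ : Oring M) = ⟨x - y, (Oring M).sub_mem hx hy⟩ := rfl
  have h2 := map_sub (resHom M) ⟨x, hx⟩ ⟨y, hy⟩
  rw [this] at h2
  exact h2

lemma π_pow' {x : K} (hx : 0 ≤ M.v x) (m : ℕ) : M.π (x ^ m) = M.π x ^ m := by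
  have : ((⟨x, hx⟩ : Oring M) ^ m) = ⟨x ^ m, (Oring M).pow_mem hx m⟩ := rfl
  have h2 := map_pow (resHom M) ⟨x, hx⟩ m
  rw [this] at h2
  exact h2

include hvp he0 in
lemma π_eq_of_PD1 {x y : K} (hx : 0 ≤ M.v x) (hy : 0 ≤ M.v y)
    (h : PD M p 1 (x - y)) : M.π x = M.π y := by
  have h0 : M.π (x - y) = 0 :=
    (M.π_eq_zero_iff _ h.inO).mpr (PD.v_pos he0 hvp h)
  rw [π_sub' hx hy] at h0
  exact sub_eq_zero.mp h0

lemma inO_σ {x : K} (hx : 0 ≤ M.v x) : 0 ≤ M.v (M.σ x) := by rwa [M.v_σ]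

lemma π_sum' {ι : Type*} (s : Finset ι) (f : ι → K) (h : ∀ i ∈ s, 0 ≤ M.v (f i)) :
    M.π (∑ i ∈ s, f i) = ∑ i ∈ s, M.π (f i) := by
  classical
  induction s using Finset.induction_on with
  | empty => simpa using π_zero' M
  | @insert j t hni ih =>
    rw [Finset.sum_insert hni, Finset.sum_insert hni,
      M.π_add _ _ (h _ (Finset.mem_insert_self _ _))
        ((Oring M).sum_mem fun i hi => h i (Finset.mem_insert_of_mem hi)), ih fun i hi => h i (Finset.mem_insert_of_mem hi)]

variable (hkp : ringChar k = p) (hfr : ∀ y : k, M.σr y = y ^ p)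

include hp hkp hmin hvp he0 in
lemma PD.pow_succ' {j : ℕ} (hj : 1 ≤ j) {x y : K} (hx : 0 ≤ M.v x) (hy : 0 ≤ M.v y)
    (h : PD M p j (x - y)) : PD M p (j + 1) (x ^ p - y ^ p) := by
  haveI : CharP k p := hkp ▸ ringChar.charP k
  have hterm : ∀ i, 0 ≤ M.v (x ^ i * y ^ (p - 1 - i)) := fun i =>
    (Oring M).mul_mem ((Oring M).pow_mem hx i) ((Oring M).pow_mem hy _)
  have hSO : 0 ≤ M.v (∑ i ∈ Finset.range p, x ^ i * y ^ (p - 1 - i)) :=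
    (PD.sum (M := M) (p := p) (j := 0) (Finset.range p) _ fun i _ => PD.of_inO (hterm i)).inO
  have hπ : M.π x = M.π y := π_eq_of_PD1 (he0 := he0) (hvp := hvp) hx hy (h.mono hj)
  have hπS : M.π (∑ i ∈ Finset.range p, x ^ i * y ^ (p - 1 - i)) = 0 := by
    rw [π_sum' _ _ fun i _ => hterm i]
    have : ∀ i ∈ Finset.range p, M.π (x ^ i * y ^ (p - 1 - i)) = M.π y ^ (p - 1) := by
      intro i hi
      rw [M.π_mul _ _ ((Oring M).pow_mem hx i) ((Oring M).pow_mem hy _),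
        π_pow' hx, π_pow' hy, hπ, ← pow_add]
      congr 1
      have := Finset.mem_range.mp hi
      omega
    rw [Finset.sum_congr rfl this, Finset.sum_const, Finset.card_range, nsmul_eq_mul,
      CharP.cast_eq_zero k p, zero_mul]
  have hS1 : PD M p 1 (∑ i ∈ Finset.range p, x ^ i * y ^ (p - 1 - i)) :=
    PD_one_of_pos (hmin := hmin) (hvp := hvp) ((M.π_eq_zero_iff _ hSO).mp hπS)
  have hfac : x ^ p - y ^ p =
      (∑ i ∈ Finset.range p, x ^ i * y ^ (p - 1 - i)) * (x - y) :=
    (geom_sum₂_mul x y p).symm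
  rw [hfac, add_comm]
  exact hS1.mul h

include hp hkp hmin hvp he0 in
lemma PD.pow_iter {j : ℕ} (hj : 1 ≤ j) {x y : K} (hx : 0 ≤ M.v x) (hy : 0 ≤ M.v y)
    (h : PD M p j (x - y)) : ∀ m : ℕ, PD M p (j + m) (x ^ p ^ m - y ^ p ^ m)
  | 0 => by simpa using h
  | (m+1) => by
    have hrec := PD.pow_iter hj hx hy h m
    have := PD.pow_succ' (hp := hp) (he0 := he0) (hmin := hmin) (hvp := hvp) (hkp := hkp)
      (j := j + m) (by omega)
      ((Oring M).pow_mem hx (p ^ m)) ((Oring M).pow_mem hy (p ^ m)) hrec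
    rw [← pow_mul, ← pow_mul, ← pow_succ, add_assoc] at this
    exact this

include hmin hvp hfr in
lemma sigma_sub_pow {x : K} (hx : 0 ≤ M.v x) : PD M p 1 (M.σ x - x ^ p) := by
  apply PD_one_of_pos (hmin := hmin) (hvp := hvp)
  apply (M.π_eq_zero_iff _ ((Oring M).sub_mem (inO_σ hx) ((Oring M).pow_mem hx p))).mp
  rw [π_sub' (inO_σ hx) ((Oring M).pow_mem hx p), M.π_σ, hfr, π_pow' hx, sub_self]

variable (M p) in
noncomputable def delK : ℕ → K → K
  | 0, a => a
  | (n+1), a =>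
    ((⇑M.σ)^[n+1] a - ∑ i ∈ (Finset.range (n+1)).attach,
        (p : K) ^ (i : ℕ) * (delK (i : ℕ) a) ^ p ^ (n + 1 - (i : ℕ))) / (p : K) ^ (n+1)
  decreasing_by exact Finset.mem_range.mp i.2

lemma delK_zero_eq (a : K) : delK M p 0 a = a := by rw [delK]

lemma delK_succ_eq (n : ℕ) (a : K) :
    delK M p (n+1) a = ((⇑M.σ)^[n+1] a - ∑ i ∈ Finset.range (n+1),
        (p : K) ^ i * (delK M p i a) ^ p ^ (n + 1 - i)) / (p : K) ^ (n+1) := by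
  rw [delK]
  congr 2
  exact Finset.sum_attach (Finset.range (n+1))
    (fun i => (p : K) ^ i * (delK M p i a) ^ p ^ (n + 1 - i))

include hp hK0 hkp hmin hvp he0 hfr in
lemma delK_spec {a : K} (ha : 0 ≤ M.v a) : ∀ n : ℕ,
    0 ≤ M.v (delK M p n a) ∧
    (⇑M.σ)^[n] a = ∑ i ∈ Finset.range (n+1), (p : K) ^ i * (delK M p i a) ^ p ^ (n - i) := by
  intro n
  induction n using Nat.strong_induction_on with
  | _ n IH =>
    match n with
    | 0 =>
      refine ⟨by rw [delK_zero_eq]; exact ha, ?_⟩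
      simp [delK_zero_eq]
    | (n+1) =>
      have hgs : (⇑M.σ)^[n+1] a =
          ∑ i ∈ Finset.range (n+1), (p : K) ^ i * (M.σ (delK M p i a)) ^ p ^ (n - i) := by
        rw [Function.iterate_succ_apply', (IH n (Nat.lt_succ_self n)).2, map_sum]
        refine Finset.sum_congr rfl fun i _ => ?_
        rw [map_mul, map_pow, map_pow, map_natCast]
      have hkey : (⇑M.σ)^[n+1] a - ∑ i ∈ Finset.range (n+1),
            (p : K) ^ i * (delK M p i a) ^ p ^ (n + 1 - i)
          = ∑ i ∈ Finset.range (n+1), (p : K) ^ i *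
            ((M.σ (delK M p i a)) ^ p ^ (n - i) - ((delK M p i a) ^ p) ^ p ^ (n - i)) := by
        rw [hgs, ← Finset.sum_sub_distrib]
        refine Finset.sum_congr rfl fun i hi => ?_
        rw [← mul_sub]
        congr 2
        rw [← pow_mul]
        congr 1
        have hi' : i ≤ n := Nat.lt_succ_iff.mp (Finset.mem_range.mp hi)
        rw [show n + 1 - i = (n - i) + 1 by omega, pow_succ, Nat.mul_comm]
      have hPD : PD M p (n+1) ((⇑M.σ)^[n+1] a - ∑ i ∈ Finset.range (n+1),
          (p : K) ^ i * (delK M p i a) ^ p ^ (n + 1 - i)) := by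
        rw [hkey]
        apply PD.sum
        intro i hi
        have hi' : i ≤ n := Nat.lt_succ_iff.mp (Finset.mem_range.mp hi)
        have hdO : 0 ≤ M.v (delK M p i a) := (IH i (by omega)).1
        have h1 : PD M p 1 (M.σ (delK M p i a) - (delK M p i a) ^ p) :=
          sigma_sub_pow (hmin := hmin) (hvp := hvp) (hfr := hfr) hdO
        have h2 : PD M p (1 + (n - i)) ((M.σ (delK M p i a)) ^ p ^ (n - i)
            - ((delK M p i a) ^ p) ^ p ^ (n - i)) :=
          PD.pow_iter (hp := hp) (he0 := he0) (hmin := hmin) (hvp := hvp) (hkp := hkp)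
            le_rfl (inO_σ hdO) ((Oring M).pow_mem hdO p) h1 (n - i)
        have h3 := h2.ppow_mul i
        rwa [show i + (1 + (n - i)) = n + 1 by omega] at h3
      obtain ⟨c, hc, hRem⟩ := hPD
      have hdn : delK M p (n+1) a = c := by
        rw [delK_succ_eq, hRem, mul_div_cancel_left₀ _ (pow_ne_zero _ (pK_ne (hp := hp) (hK0 := hK0)))]
      refine ⟨by rw [hdn]; exact hc, ?_⟩
      rw [Finset.sum_range_succ, show n + 1 - (n+1) = 0 by omega, pow_zero, pow_one, hdn,
        ← hRem]
      ring
  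
lemma iter_map_add_s5 (i : ℕ) (x y : K) :
    (⇑M.σ)^[i] (x + y) = (⇑M.σ)^[i] x + (⇑M.σ)^[i] y := by
  induction i with
  | zero => rfl
  | succ i ih => rw [Function.iterate_succ_apply', Function.iterate_succ_apply',
      Function.iterate_succ_apply', ih, map_add]

lemma iter_map_mul_s5 (i : ℕ) (x y : K) :
    (⇑M.σ)^[i] (x * y) = (⇑M.σ)^[i] x * (⇑M.σ)^[i] y := by
  induction i with
  | zero => rfl
  | succ i ih => rw [Function.iterate_succ_apply', Function.iterate_succ_apply',
      Function.iterate_succ_apply', ih, map_mul]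

lemma iter_map_natCast (i m : ℕ) : (⇑M.σ)^[i] (m : K) = (m : K) :=
  Function.iterate_fixed (map_natCast M.σ m) i

lemma iter_map_one (i : ℕ) : (⇑M.σ)^[i] (1 : K) = 1 :=
  Function.iterate_fixed (map_one M.σ) i

lemma iter_map_zero_s5 (i : ℕ) : (⇑M.σ)^[i] (0 : K) = 0 :=
  Function.iterate_fixed (map_zero M.σ) i

lemma v_iter (i : ℕ) (x : K) : M.v ((⇑M.σ)^[i] x) = M.v x := by
  induction i with
  | zero => rfl
  | succ i ih => rw [Function.iterate_succ_apply', M.v_σ, ih]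

lemma π_iter (i : ℕ) (x : K) : M.π ((⇑M.σ)^[i] x) = (⇑M.σr)^[i] (M.π x) := by
  induction i with
  | zero => rfl
  | succ i ih => rw [Function.iterate_succ_apply', Function.iterate_succ_apply',
      M.π_σ, ih]

include hp hK0 in
lemma ghost_inj {x y : ℕ → K}
    (h : ∀ m : ℕ, ∑ i ∈ Finset.range (m+1), (p:K)^i * (x i)^p^(m-i)
            = ∑ i ∈ Finset.range (m+1), (p:K)^i * (y i)^p^(m-i)) :
    ∀ m, x m = y m := by
  intro m
  induction m using Nat.strong_induction_on with
  | _ m IH =>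
    have hm := h m
    rw [Finset.sum_range_succ, Finset.sum_range_succ] at hm
    have heq : ∑ i ∈ Finset.range m, (p:K)^i * (x i)^p^(m-i)
        = ∑ i ∈ Finset.range m, (p:K)^i * (y i)^p^(m-i) :=
      Finset.sum_congr rfl fun i hi => by rw [IH i (Finset.mem_range.mp hi)]
    rw [heq, Nat.sub_self, pow_zero, pow_one, pow_one] at hm
    exact mul_left_cancel₀ (pow_ne_zero _ (pK_ne (hp := hp) (hK0 := hK0)))
      (add_left_cancel hm)

include hp in
lemma delK_zero_val : ∀ n : ℕ, delK M p n 0 = 0 := by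
  intro n
  induction n using Nat.strong_induction_on with
  | _ n IH =>
    match n with
    | 0 => exact delK_zero_eq 0
    | (n+1) =>
      rw [delK_succ_eq, iter_map_zero_s5]
      have : ∀ i ∈ Finset.range (n+1), (p:K)^i * (delK M p i 0)^p^(n+1-i) = 0 := by
        intro i hi
        rw [IH i (Finset.mem_range.mp hi), zero_pow (Nat.pow_pos hp.pos).ne', mul_zero]
      rw [Finset.sum_congr rfl this, Finset.sum_const, smul_zero, sub_zero, zero_div]

include hp in
lemma delK_one_val : ∀ n : ℕ, delK M p (n+1) 1 = 0 := by
  intro n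
  induction n using Nat.strong_induction_on with
  | _ n IH =>
    rw [delK_succ_eq, iter_map_one]
    have hsum : ∑ i ∈ Finset.range (n+1), (p:K)^i * (delK M p i 1)^p^(n+1-i) = 1 := by
      rw [Finset.sum_range_succ']
      have h0 : (p:K)^(0:ℕ) * (delK M p 0 1)^p^(n+1-0) = 1 := by
        rw [delK_zero_eq, pow_zero, one_pow, one_mul]
      have hz : ∀ i ∈ Finset.range n, (p:K)^(i+1) * (delK M p (i+1) 1)^p^(n+1-(i+1)) = 0 := by
        intro i hi
        rw [IH i (Finset.mem_range.mp hi), zero_pow (Nat.pow_pos hp.pos).ne', mul_zero]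
      rw [Finset.sum_congr rfl hz, Finset.sum_const, smul_zero, zero_add, h0]
    rw [hsum, sub_self, zero_div]

include hp hK0 hkp hmin hvp he0 hfr in
lemma delK_perturb {a u : K} (ha : 0 ≤ M.v a) (hu : 0 ≤ M.v u) (m : ℕ) :
    ∀ i, i ≤ m → ∃ d : K, 0 ≤ M.v d ∧
      delK M p i (a + (p:K)^m * u)
        = delK M p i a + (p:K)^(m-i) * (⇑M.σ)^[i] u + (p:K)^(m+1-i) * d := by
  intro i
  induction i using Nat.strong_induction_on with
  | _ i IH =>
    intro him
    have ha' : 0 ≤ M.v (a + (p:K)^m * u) :=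
      (Oring M).add_mem ha ((Oring M).mul_mem (inO_ppow m) hu)
    have hx := (delK_spec (hp := hp) (hK0 := hK0) (hkp := hkp) (hmin := hmin)
      (hvp := hvp) (he0 := he0) (hfr := hfr) ha' i).2
    have hy := (delK_spec (hp := hp) (hK0 := hK0) (hkp := hkp) (hmin := hmin)
      (hvp := hvp) (he0 := he0) (hfr := hfr) ha i).2
    rw [Finset.sum_range_succ, Nat.sub_self, pow_zero, pow_one] at hx hy
    have giter : (⇑M.σ)^[i] (a + (p:K)^m * u)
        = (⇑M.σ)^[i] a + (p:K)^m * (⇑M.σ)^[i] u := by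
      have hc : (⇑M.σ)^[i] ((p:K)^m) = (p:K)^m := by
        have h := iter_map_natCast (M := M) i (p ^ m)
        push_cast at h
        exact h
      rw [iter_map_add_s5, iter_map_mul_s5, hc]
    have hD : PD M p (m+1) (∑ l ∈ Finset.range i,
        ((p:K)^l * (delK M p l (a + (p:K)^m * u))^p^(i-l)
          - (p:K)^l * (delK M p l a)^p^(i-l))) := by
      apply PD.sum
      intro l hl
      have hl' : l < i := Finset.mem_range.mp hl
      obtain ⟨d, hdO, hdeq⟩ := IH l hl' (by omega)
      have hxlO : 0 ≤ M.v (delK M p l (a + (p:K)^m * u)) :=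
        (delK_spec (hp := hp) (hK0 := hK0) (hkp := hkp) (hmin := hmin)
          (hvp := hvp) (he0 := he0) (hfr := hfr) ha' l).1
      have hylO : 0 ≤ M.v (delK M p l a) :=
        (delK_spec (hp := hp) (hK0 := hK0) (hkp := hkp) (hmin := hmin)
          (hvp := hvp) (he0 := he0) (hfr := hfr) ha l).1
      have hsub : PD M p (m - l) (delK M p l (a + (p:K)^m * u) - delK M p l a) := by
        refine ⟨(⇑M.σ)^[l] u + (p:K) * d, ?_, ?_⟩
        · exact (Oring M).add_mem (by show (0:WithTop Γ) ≤ M.v ((⇑M.σ)^[l] u); rw [v_iter]; exact hu)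
            ((Oring M).mul_mem (inO_natCast p) hdO)
        · rw [hdeq]
          rw [show m + 1 - l = (m - l) + 1 by omega, pow_succ]
          ring
      have hiter := PD.pow_iter (hp := hp) (he0 := he0) (hmin := hmin) (hvp := hvp)
        (hkp := hkp) (j := m - l) (by omega) hxlO hylO hsub (i - l)
      rw [← mul_sub]
      exact (hiter.ppow_mul l).mono (by omega)
    obtain ⟨D, hDO, hDeq⟩ := hD
    refine ⟨-D, (Oring M).neg_mem hDO, ?_⟩
    have hpm : (p:K)^i * (p:K)^(m-i) = (p:K)^m := by rw [← pow_add]; congr 1; omega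
    have hpm1 : (p:K)^i * (p:K)^(m+1-i) = (p:K)^(m+1) := by rw [← pow_add]; congr 1; omega
    have hsd : ∑ l ∈ Finset.range i, (p:K)^l * (delK M p l (a + (p:K)^m * u))^p^(i-l)
             - ∑ l ∈ Finset.range i, (p:K)^l * (delK M p l a)^p^(i-l) = (p:K)^(m+1) * D := by
      rw [← Finset.sum_sub_distrib]
      exact hDeq
    apply mul_left_cancel₀ (pow_ne_zero i (pK_ne (hp := hp) (hK0 := hK0)))
    linear_combination (-1 : K) * hx + hy + giter - hsd
      - ((⇑M.σ)^[i] u) * hpm + D * hpm1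

lemma intPoly_map_aeval {R S : Type*} [CommRing R] [CommRing S] (g : R →+* S)
    {ι : Type*} (x : ι → R) (φ : MvPolynomial ι ℤ) :
    g (MvPolynomial.aeval x φ) = MvPolynomial.aeval (fun i => g (x i)) φ := by
  rw [MvPolynomial.map_aeval,
    show g.comp (algebraMap ℤ R) = algebraMap ℤ S from Subsingleton.elim _ _]
  rfl

include hp hK0 hkp hmin hvp he0 hfr in
lemma delK_structure [Fact p.Prime] (Φ : MvPolynomial (Fin 2) ℤ) {b c a : K}
    (hb : 0 ≤ M.v b) (hc : 0 ≤ M.v c) (hA : 0 ≤ M.v a)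
    (hghost : ∀ m : ℕ, (⇑M.σ)^[m] a
      = MvPolynomial.aeval (fun j : Fin 2 => (⇑M.σ)^[m] (if j = 0 then b else c)) Φ)
    (m : ℕ) :
    delK M p m a = MvPolynomial.aeval
      (fun q : Fin 2 × ℕ => delK M p q.2 (if q.1 = 0 then b else c))
      (wittStructureInt p Φ m) := by
  haveI : Fact p.Prime := ⟨hp⟩
  refine ghost_inj (hp := hp) (hK0 := hK0) (x := fun m => delK M p m a)
    (y := fun m => MvPolynomial.aeval
      (fun q : Fin 2 × ℕ => delK M p q.2 (if q.1 = 0 then b else c))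
      (wittStructureInt p Φ m)) ?_ m
  intro N
  have specA := (delK_spec (hp := hp) (hK0 := hK0) (hkp := hkp) (hmin := hmin)
    (hvp := hvp) (he0 := he0) (hfr := hfr) hA N).2
  have hite : ∀ j : Fin 2, 0 ≤ M.v (if j = 0 then b else c) := by
    intro j; split_ifs <;> assumption
  have spec2 := fun j : Fin 2 => (delK_spec (hp := hp) (hK0 := hK0) (hkp := hkp)
    (hmin := hmin) (hvp := hvp) (he0 := he0) (hfr := hfr) (hite j) N).2
  calc ∑ i ∈ Finset.range (N+1), (p:K)^i * (delK M p i a)^p^(N-i)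
      = (⇑M.σ)^[N] a := specA.symm
    _ = MvPolynomial.aeval (fun j : Fin 2 => (⇑M.σ)^[N] (if j = 0 then b else c)) Φ :=
        hghost N
    _ = MvPolynomial.aeval (fun j : Fin 2 =>
          MvPolynomial.aeval ((fun q : Fin 2 × ℕ => delK M p q.2 (if q.1 = 0 then b else c))
            ∘ Prod.mk j) (wittPolynomial p ℤ N)) Φ := by
        refine congrArg (fun f : Fin 2 → K => MvPolynomial.aeval f Φ) (funext fun j => ?_)
        rw [aeval_wittPolynomial]
        exact spec2 j
    _ = MvPolynomial.aeval (fun j : Fin 2 =>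
          MvPolynomial.aeval (fun q : Fin 2 × ℕ => delK M p q.2 (if q.1 = 0 then b else c))
            (MvPolynomial.rename (Prod.mk j) (wittPolynomial p ℤ N))) Φ := by
        refine congrArg (fun f : Fin 2 → K => MvPolynomial.aeval f Φ) (funext fun j => ?_)
        rw [MvPolynomial.aeval_rename]
    _ = MvPolynomial.aeval (fun q : Fin 2 × ℕ => delK M p q.2 (if q.1 = 0 then b else c))
          (MvPolynomial.bind₁ (fun j : Fin 2 =>
            MvPolynomial.rename (Prod.mk j) (wittPolynomial p ℤ N)) Φ) :=
        (MvPolynomial.aeval_bind₁ _ _ _).symm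
    _ = MvPolynomial.aeval (fun q : Fin 2 × ℕ => delK M p q.2 (if q.1 = 0 then b else c))
          (MvPolynomial.bind₁ (wittStructureInt p Φ) (wittPolynomial p ℤ N)) := by
        rw [wittStructureInt_prop]
    _ = MvPolynomial.aeval (fun i : ℕ => MvPolynomial.aeval
          (fun q : Fin 2 × ℕ => delK M p q.2 (if q.1 = 0 then b else c))
          (wittStructureInt p Φ i)) (wittPolynomial p ℤ N) :=
        MvPolynomial.aeval_bind₁ _ _ _
    _ = ∑ i ∈ Finset.range (N+1), (p:K)^i * (MvPolynomial.aeval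
          (fun q : Fin 2 × ℕ => delK M p q.2 (if q.1 = 0 then b else c))
          (wittStructureInt p Φ i))^p^(N-i) := by
        rw [aeval_wittPolynomial]

include hp hK0 hkp hmin hvp he0 hfr in
lemma π_delK_structure [Fact p.Prime] (Φ : MvPolynomial (Fin 2) ℤ) {b c a : K}
    (hb : 0 ≤ M.v b) (hc : 0 ≤ M.v c) (hA : 0 ≤ M.v a)
    (hghost : ∀ m : ℕ, (⇑M.σ)^[m] a
      = MvPolynomial.aeval (fun j : Fin 2 => (⇑M.σ)^[m] (if j = 0 then b else c)) Φ)
    (m : ℕ) :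
    M.π (delK M p m a) = MvPolynomial.aeval
      (fun q : Fin 2 × ℕ => M.π (delK M p q.2 (if q.1 = 0 then b else c)))
      (wittStructureInt p Φ m) := by
  have hmem : ∀ q : Fin 2 × ℕ, 0 ≤ M.v (delK M p q.2 (if q.1 = 0 then b else c)) := by
    intro q
    refine (delK_spec (hp := hp) (hK0 := hK0) (hkp := hkp) (hmin := hmin)
      (hvp := hvp) (he0 := he0) (hfr := hfr) ?_ q.2).1
    split_ifs <;> assumption
  have h1 : delK M p m a
      = ((Oring M).subtype) (MvPolynomial.aeval (fun q => (⟨_, hmem q⟩ : Oring M))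
          (wittStructureInt p Φ m)) := by
    rw [intPoly_map_aeval]
    exact delK_structure (hp := hp) (hK0 := hK0) (hkp := hkp) (hmin := hmin)
      (hvp := hvp) (he0 := he0) (hfr := hfr) Φ hb hc hA hghost m
  have h2 : M.π (delK M p m a)
      = resHom M (MvPolynomial.aeval (fun q => (⟨_, hmem q⟩ : Oring M))
          (wittStructureInt p Φ m)) := by
    rw [h1]; rfl
  rw [h2, intPoly_map_aeval (resHom M)]
  rfl

include hp hK0 in
lemma PD_of_v_le {j : ℕ} {x : K} (h : M.v ((p:K)^j) ≤ M.v x) : PD M p j x := by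
  rcases eq_or_ne x 0 with rfl | hx
  · exact PD.zero j
  · have hpj : ((p:K)^j) ≠ 0 := pow_ne_zero _ (pK_ne (hp := hp) (hK0 := hK0))
    refine ⟨x / (p:K)^j, ?_, (mul_div_cancel₀ x hpj).symm⟩
    have hmul : M.v ((p:K)^j * (x / (p:K)^j)) = M.v ((p:K)^j) + M.v (x / (p:K)^j) :=
      M.v_mul _ _
    rw [mul_div_cancel₀ x hpj] at hmul
    by_contra hneg
    push_neg at hneg
    have hlt : M.v x < M.v ((p:K)^j) := by
      calc M.v x = M.v ((p:K)^j) + M.v (x / (p:K)^j) := hmul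
      _ < M.v ((p:K)^j) + 0 := by
          apply WithTop.add_lt_add_left
          · exact fun ht => hpj ((M.v_top_iff _).mp ht)
          · exact hneg
      _ = M.v ((p:K)^j) := add_zero _
    exact absurd (lt_of_le_of_lt h hlt) (lt_irrefl _)

lemma PD.v_le {j : ℕ} {x : K} (h : PD M p j x) : M.v ((p:K)^j) ≤ M.v x := by
  obtain ⟨c, hc, rfl⟩ := h
  rw [M.v_mul]
  calc M.v ((p:K)^j) = M.v ((p:K)^j) + 0 := (add_zero _).symm
  _ ≤ M.v ((p:K)^j) + M.v c := add_le_add le_rfl hc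

lemma π_lift (z : k) : ∃ u : K, 0 ≤ M.v u ∧ M.π u = z := by
  obtain ⟨x, hx⟩ := M.π_surj z
  by_cases h : 0 ≤ M.v x
  · exact ⟨x, h, hx⟩
  · exact ⟨0, by rw [v_zero']; exact le_top, by rw [π_zero']; rw [M.π_junk x h] at hx; exact hx⟩

include hmin hvp he0 in
lemma π_p_mul {w : K} (hw : 0 ≤ M.v w) {j : ℕ} (hj : 1 ≤ j) :
    M.π ((p:K)^j * w) = 0 := by
  have hPD : PD M p 1 ((p:K)^j * w) := by
    have h0 : PD M p j ((p:K)^j * w) := ⟨w, hw, rfl⟩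
    exact h0.mono hj
  exact (M.π_eq_zero_iff _ hPD.inO).mpr (hPD.v_pos (he0 := he0) (hvp := hvp))

end WittMain
end Witt

/-- Lemma 4.1/4.2: in the Witt case there is a unique sequence of operators
`∂₀, ∂₁, … : O → O` with `∂₀ = id` and `σⁿ a = Wₙ(∂₀ a, …, ∂ₙ a)`, and
`a ↦ (∂₀(a)‾, …, ∂ₙ(a)‾)` is a surjective ring morphism from `O` onto the
truncated Witt vectors `W[k]/(p^{n+1})` with kernel `p^{n+1} O`. -/
theorem stmt5 {K : Type u} {Γ : Type v} {k : Type w}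
    [Field K] [AddCommGroup Γ] [LinearOrder Γ] [IsOrderedAddMonoid Γ] [Field k]
    (M : ValuedDiffField K Γ k) (p : ℕ) [Fact p.Prime] (hW : WittCase M p) :
    ∃ del : ℕ → {x : K // 0 ≤ M.v x} → {x : K // 0 ≤ M.v x},
      (∀ a, del 0 a = a) ∧
      (∀ (a : {x : K // 0 ≤ M.v x}) (n : ℕ),
        (⇑M.σ)^[n] (a : K) =
          ∑ i ∈ Finset.range (n + 1), (p : K) ^ i * ((del i a : K)) ^ p ^ (n - i)) ∧
      (∀ del' : ℕ → {x : K // 0 ≤ M.v x} → {x : K // 0 ≤ M.v x},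
        (∀ a, del' 0 a = a) →
        (∀ (a : {x : K // 0 ≤ M.v x}) (n : ℕ),
          (⇑M.σ)^[n] (a : K) =
            ∑ i ∈ Finset.range (n + 1), (p : K) ^ i * ((del' i a : K)) ^ p ^ (n - i)) →
        del' = del) ∧
      (∀ n : ℕ, ∃ ψ : {x : K // 0 ≤ M.v x} → TruncatedWittVector p (n + 1) k,
        (∀ a, ψ a = TruncatedWittVector.mk p fun i : Fin (n + 1) => M.π ((del (i : ℕ) a : K))) ∧
        (∀ a b c : {x : K // 0 ≤ M.v x}, (a : K) = (b : K) + (c : K) → ψ a = ψ b + ψ c) ∧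
        (∀ a b c : {x : K // 0 ≤ M.v x}, (a : K) = (b : K) * (c : K) → ψ a = ψ b * ψ c) ∧
        (∀ a : {x : K // 0 ≤ M.v x}, (a : K) = 1 → ψ a = 1) ∧
        Function.Surjective ψ ∧
        (∀ a : {x : K // 0 ≤ M.v x},
          ψ a = 0 ↔ ∃ b : {x : K // 0 ≤ M.v x}, (a : K) = (p : K) ^ (n + 1) * (b : K))) := by
  obtain ⟨hp, hK0, hkp, hPF, ⟨e, he0, hmin, hvp⟩, hfr⟩ := hW
  have spec := fun (x : K) (hx : 0 ≤ M.v x) (m : ℕ) =>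
    delK_spec (hp := hp) (hK0 := hK0) (hkp := hkp) (hmin := hmin)
      (hvp := hvp) (he0 := he0) (hfr := hfr) hx m
  have perturb := fun {a u : K} (ha : 0 ≤ M.v a) (hu : 0 ≤ M.v u) (m i : ℕ) (him : i ≤ m) =>
    delK_perturb (hp := hp) (hK0 := hK0) (hkp := hkp) (hmin := hmin)
      (hvp := hvp) (he0 := he0) (hfr := hfr) ha hu m i him
  refine ⟨fun m a => ⟨delK M p m a.1, (spec a.1 a.2 m).1⟩, ?_, ?_, ?_, ?_⟩
  · exact fun a => Subtype.ext (delK_zero_eq a.1)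
  · exact fun a m => (spec a.1 a.2 m).2
  · -- uniqueness
    intro del' h0 hgh
    funext m a
    induction m using Nat.strong_induction_on with
    | _ m IH =>
      apply Subtype.ext
      show (del' m a : K) = delK M p m a.1
      match m with
      | 0 => rw [h0 a, delK_zero_eq]
      | (m+1) =>
        have h1 := hgh a (m+1)
        have h2 := (spec a.1 a.2 (m+1)).2
        rw [Finset.sum_range_succ, Nat.sub_self, pow_zero, pow_one] at h1 h2
        have heq : ∑ i ∈ Finset.range (m+1), (p:K)^i * ((del' i a : K))^p^(m+1-i)
            = ∑ i ∈ Finset.range (m+1), (p:K)^i * (delK M p i a.1)^p^(m+1-i) := by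
          refine Finset.sum_congr rfl fun i hi => ?_
          have := IH i (Finset.mem_range.mp hi)
          rw [this]
        rw [heq] at h1
        rw [h1] at h2
        exact mul_left_cancel₀ (pow_ne_zero _ (pK_ne (hp := hp) (hK0 := hK0)))
          (add_left_cancel h2)
  · intro n
    refine ⟨fun a => TruncatedWittVector.mk p (fun i : Fin (n+1) => M.π (delK M p (i:ℕ) a.1)),
      fun a => rfl, ?_, ?_, ?_, ?_, ?_⟩
    · -- additivity
      intro a b c habc
      have hg : ∀ m' : ℕ, (⇑M.σ)^[m'] a.1 = MvPolynomial.aeval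
          (fun j : Fin 2 => (⇑M.σ)^[m'] (if j = 0 then b.1 else c.1))
          (MvPolynomial.X 0 + MvPolynomial.X 1 : MvPolynomial (Fin 2) ℤ) := by
        intro m'
        have hX : MvPolynomial.aeval (fun j : Fin 2 => (⇑M.σ)^[m'] (if j = 0 then b.1 else c.1))
            (MvPolynomial.X 0 + MvPolynomial.X 1 : MvPolynomial (Fin 2) ℤ)
            = (⇑M.σ)^[m'] b.1 + (⇑M.σ)^[m'] c.1 := by
          rw [map_add, MvPolynomial.aeval_X, MvPolynomial.aeval_X]
          norm_num
        rw [habc, iter_map_add_s5, hX]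
      have hWadd : WittVector.mk p (fun m => M.π (delK M p m a.1))
          = WittVector.mk p (fun m => M.π (delK M p m b.1))
            + WittVector.mk p (fun m => M.π (delK M p m c.1)) := by
        apply WittVector.ext
        intro m
        rw [WittVector.add_coeff, WittVector.coeff_mk]
        rw [π_delK_structure (hp := hp) (hK0 := hK0) (hkp := hkp) (hmin := hmin)
          (hvp := hvp) (he0 := he0) (hfr := hfr)
          (MvPolynomial.X 0 + MvPolynomial.X 1) b.2 c.2 a.2 hg m]
        show _ = MvPolynomial.aeval (Function.uncurry
          ![(WittVector.mk p fun m => M.π (delK M p m b.1)).coeff,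
            (WittVector.mk p fun m => M.π (delK M p m c.1)).coeff])
          (wittStructureInt p (MvPolynomial.X 0 + MvPolynomial.X 1) m)
        refine congrArg (fun f : Fin 2 × ℕ → k => MvPolynomial.aeval f
          (wittStructureInt p (MvPolynomial.X 0 + MvPolynomial.X 1) m))
          (funext fun q => ?_)
        rcases q with ⟨j, l⟩
        fin_cases j <;>
          simp [Function.uncurry, WittVector.coeff_mk]
      apply TruncatedWittVector.ext
      intro i
      show M.π (delK M p (i:ℕ) a.1) = TruncatedWittVector.coeff i _
      have hcoeff : (TruncatedWittVector.mk p (fun i : Fin (n+1) => M.π (delK M p (i:ℕ) b.1))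
            + TruncatedWittVector.mk p (fun i : Fin (n+1) => M.π (delK M p (i:ℕ) c.1)))
          = WittVector.truncateFun (n+1) (WittVector.mk p (fun m => M.π (delK M p m b.1))
            + WittVector.mk p (fun m => M.π (delK M p m c.1))) := by
        rw [WittVector.truncateFun_add]
        congr 1 <;>
        · apply TruncatedWittVector.ext
          intro i
          rw [TruncatedWittVector.coeff_mk, WittVector.coeff_truncateFun, WittVector.coeff_mk]
      rw [hcoeff, ← hWadd, WittVector.coeff_truncateFun, WittVector.coeff_mk]
    · -- multiplicativity
      intro a b c habc
      have hg : ∀ m' : ℕ, (⇑M.σ)^[m'] a.1 = MvPolynomial.aeval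
          (fun j : Fin 2 => (⇑M.σ)^[m'] (if j = 0 then b.1 else c.1))
          (MvPolynomial.X 0 * MvPolynomial.X 1 : MvPolynomial (Fin 2) ℤ) := by
        intro m'
        have hX : MvPolynomial.aeval (fun j : Fin 2 => (⇑M.σ)^[m'] (if j = 0 then b.1 else c.1))
            (MvPolynomial.X 0 * MvPolynomial.X 1 : MvPolynomial (Fin 2) ℤ)
            = (⇑M.σ)^[m'] b.1 * (⇑M.σ)^[m'] c.1 := by
          rw [map_mul, MvPolynomial.aeval_X, MvPolynomial.aeval_X]
          norm_num
        rw [habc, iter_map_mul_s5, hX]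
      have hWmul : WittVector.mk p (fun m => M.π (delK M p m a.1))
          = WittVector.mk p (fun m => M.π (delK M p m b.1))
            * WittVector.mk p (fun m => M.π (delK M p m c.1)) := by
        apply WittVector.ext
        intro m
        rw [WittVector.mul_coeff, WittVector.coeff_mk]
        rw [π_delK_structure (hp := hp) (hK0 := hK0) (hkp := hkp) (hmin := hmin)
          (hvp := hvp) (he0 := he0) (hfr := hfr)
          (MvPolynomial.X 0 * MvPolynomial.X 1) b.2 c.2 a.2 hg m]
        show _ = MvPolynomial.aeval (Function.uncurry
          ![(WittVector.mk p fun m => M.π (delK M p m b.1)).coeff,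
            (WittVector.mk p fun m => M.π (delK M p m c.1)).coeff])
          (wittStructureInt p (MvPolynomial.X 0 * MvPolynomial.X 1) m)
        refine congrArg (fun f : Fin 2 × ℕ → k => MvPolynomial.aeval f
          (wittStructureInt p (MvPolynomial.X 0 * MvPolynomial.X 1) m))
          (funext fun q => ?_)
        rcases q with ⟨j, l⟩
        fin_cases j <;>
          simp [Function.uncurry, WittVector.coeff_mk]
      apply TruncatedWittVector.ext
      intro i
      show M.π (delK M p (i:ℕ) a.1) = TruncatedWittVector.coeff i _
      have hcoeff : (TruncatedWittVector.mk p (fun i : Fin (n+1) => M.π (delK M p (i:ℕ) b.1))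
            * TruncatedWittVector.mk p (fun i : Fin (n+1) => M.π (delK M p (i:ℕ) c.1)))
          = WittVector.truncateFun (n+1) (WittVector.mk p (fun m => M.π (delK M p m b.1))
            * WittVector.mk p (fun m => M.π (delK M p m c.1))) := by
        rw [WittVector.truncateFun_mul]
        congr 1 <;>
        · apply TruncatedWittVector.ext
          intro i
          rw [TruncatedWittVector.coeff_mk, WittVector.coeff_truncateFun, WittVector.coeff_mk]
      rw [hcoeff, ← hWmul, WittVector.coeff_truncateFun, WittVector.coeff_mk]
    · -- one
      intro a ha
      apply TruncatedWittVector.ext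
      intro i
      rw [TruncatedWittVector.coeff_mk,
        ← WittVector.truncateFun_one p (n+1) k, WittVector.coeff_truncateFun]
      rcases i with ⟨iv, hiv⟩
      cases iv with
      | zero => rw [ha, delK_zero_eq, M.π_one, WittVector.one_coeff_zero]
      | succ j =>
        rw [ha, delK_one_val (hp := hp) j, π_zero',
          WittVector.one_coeff_eq_of_pos _ _ _ (Nat.succ_pos j)]
    · -- surjectivity
      intro t
      have main : ∀ m : ℕ, m ≤ n+1 → ∃ x : K, 0 ≤ M.v x ∧
          ∀ i : Fin (n+1), (i:ℕ) < m → M.π (delK M p (i:ℕ) x) = t.coeff i := by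
        intro m
        induction m with
        | zero =>
          exact fun _ => ⟨0, by rw [v_zero']; exact le_top,
            fun i hi => absurd hi (Nat.not_lt_zero _)⟩
        | succ m IHm =>
          intro hm1
          obtain ⟨x, hx, hxi⟩ := IHm (by omega)
          have hmn : m < n+1 := hm1
          obtain ⟨u, hu, hπu⟩ := π_lift (M := M)
            ((⇑M.σr.symm)^[m] (t.coeff ⟨m, hmn⟩ - M.π (delK M p m x)))
          refine ⟨x + (p:K)^m * u,
            (Oring M).add_mem hx ((Oring M).mul_mem (inO_ppow m) hu), ?_⟩
          intro i hi
          obtain ⟨d, hd, hdeq⟩ := perturb hx hu m (i:ℕ) (by omega)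
          have hδO : 0 ≤ M.v (delK M p (i:ℕ) x) := (spec x hx (i:ℕ)).1
          have hσuO : 0 ≤ M.v ((⇑M.σ)^[(i:ℕ)] u) := by rw [v_iter]; exact hu
          rcases Nat.lt_or_ge (i:ℕ) m with him | him
          · rw [hdeq, M.π_add _ _ ((Oring M).add_mem hδO
              ((Oring M).mul_mem (inO_ppow _) hσuO))
              ((Oring M).mul_mem (inO_ppow _) hd),
              M.π_add _ _ hδO ((Oring M).mul_mem (inO_ppow _) hσuO),
              π_p_mul (hmin := hmin) (hvp := hvp) (he0 := he0) hσuO (by omega),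
              π_p_mul (hmin := hmin) (hvp := hvp) (he0 := he0) hd (by omega),
              add_zero, add_zero]
            exact hxi i him
          · have hie : (i:ℕ) = m := by omega
            have hfin : (⟨m, hmn⟩ : Fin (n+1)) = i := by
              apply Fin.ext
              simp [hie]
            rw [hdeq, hie, Nat.sub_self, pow_zero, one_mul,
              show m + 1 - m = 1 by omega,
              M.π_add _ _ ((Oring M).add_mem (spec x hx m).1
                (by show (0:WithTop Γ) ≤ M.v ((⇑M.σ)^[m] u); rw [v_iter]; exact hu))
                ((Oring M).mul_mem (inO_ppow 1) hd),
              M.π_add _ _ (spec x hx m).1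
                (by show (0:WithTop Γ) ≤ M.v ((⇑M.σ)^[m] u); rw [v_iter]; exact hu),
              π_p_mul (hmin := hmin) (hvp := hvp) (he0 := he0) hd le_rfl,
              add_zero, π_iter, hπu]
            rw [Function.LeftInverse.iterate M.σr.apply_symm_apply m _]
            rw [← hfin]
            ring
      obtain ⟨x, hx, hxi⟩ := main (n+1) le_rfl
      exact ⟨⟨x, hx⟩, TruncatedWittVector.ext fun i => by
        rw [TruncatedWittVector.coeff_mk]; exact hxi i i.isLt⟩
    · -- kernel
      intro a
      constructor
      · intro h0
        have hc : ∀ i : Fin (n+1), M.π (delK M p (i:ℕ) a.1) = 0 := by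
          intro i
          have h := congrArg (fun t => TruncatedWittVector.coeff i t) h0
          simpa [TruncatedWittVector.coeff_mk, TruncatedWittVector.coeff_zero] using h
        have hσ : PD M p (n+1) ((⇑M.σ)^[n] a.1) := by
          rw [(spec a.1 a.2 n).2]
          apply PD.sum
          intro i hi
          have hi' : i ≤ n := Nat.lt_succ_iff.mp (Finset.mem_range.mp hi)
          have hiO := (spec a.1 a.2 i).1
          obtain ⟨ci, hciO, hcieq⟩ := PD_one_of_pos (hmin := hmin) (hvp := hvp)
            ((M.π_eq_zero_iff _ hiO).mp (hc ⟨i, Finset.mem_range.mp hi⟩))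
          refine PD.mono ?_ (⟨ci^(p^(n-i)), (Oring M).pow_mem hciO _, ?_⟩ :
            PD M p (i + p^(n-i)) ((p:K)^i * (delK M p i a.1)^p^(n-i)))
          · have := Nat.lt_pow_self (n := n-i) hp.one_lt
            omega
          · rw [hcieq, pow_one, mul_pow, pow_add]
            ring
        have hva : M.v ((p:K)^(n+1)) ≤ M.v a.1 := by
          rw [← v_iter (M := M) n a.1]
          exact hσ.v_le
        obtain ⟨bb, hbbO, heq⟩ := PD_of_v_le (hp := hp) (hK0 := hK0) hva
        exact ⟨⟨bb, hbbO⟩, heq⟩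
      · rintro ⟨b, hab⟩
        apply TruncatedWittVector.ext
        intro i
        rw [TruncatedWittVector.coeff_mk, TruncatedWittVector.coeff_zero]
        have h00 : a.1 = 0 + (p:K)^(n+1) * b.1 := by rw [zero_add]; exact hab
        have h0O : (0:WithTop Γ) ≤ M.v (0:K) := by rw [v_zero']; exact le_top
        obtain ⟨d, hd, hdeq⟩ := perturb h0O b.2 (n+1) (i:ℕ) (by omega)
        have hσbO : 0 ≤ M.v ((⇑M.σ)^[(i:ℕ)] b.1) := by rw [v_iter]; exact b.2
        rw [h00, hdeq, delK_zero_val (hp := hp), zero_add,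
          M.π_add _ _ ((Oring M).mul_mem (inO_ppow _) hσbO)
            ((Oring M).mul_mem (inO_ppow _) hd),
          π_p_mul (hmin := hmin) (hvp := hvp) (he0 := he0) hσbO (by omega),
          π_p_mul (hmin := hmin) (hvp := hvp) (he0 := he0) hd (by omega),
          add_zero]


end VDFPaper
end
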